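/- arXiv:2008.09423 — 8 statements merged into one kernel-verified Lean document; each statement's English description precedes it below -/
import Mathlib

section
/- Let G be a group and let C be a subgroup of G contained in the centre Z(G). If the quotient group G/C is finite, then the commutator subgroup [G, G] of G is finite. -/
open scoped commutatorElement

lemma commutator_eq_of_central {G : Type*} [Group G] (a b c d : G)
    (hc : c ∈ Subgroup.center G) (hd : d ∈ Subgroup.center G) :
    ⁅a * c, b * d⁆ = ⁅a, b⁆ := by
  rw [Subgroup.mem_center_iff] at hc hd
  have h1 : c * (b * d) * c⁻¹ = b * d := by rw [← hc (b * d), mul_inv_cancel_right]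
  have h2 : d * a⁻¹ * d⁻¹ = a⁻¹ := by rw [← hd a⁻¹, mul_inv_cancel_right]
  simp only [commutatorElement_def]
  calc a * c * (b * d) * (a * c)⁻¹ * (b * d)⁻¹
      = a * (c * (b * d) * c⁻¹) * a⁻¹ * (b * d)⁻¹ := by group
    _ = a * (b * d) * a⁻¹ * (b * d)⁻¹ := by rw [h1]
    _ = a * b * (d * a⁻¹ * d⁻¹) * b⁻¹ := by group
    _ = a * b * a⁻¹ * b⁻¹ := by rw [h2]

/-- **Schur's Theorem.** If `C` is a subgroup of a group `G` contained in the centre of `G`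
and the quotient `G ⧸ C` is finite, then the commutator subgroup of `G` is finite. -/
theorem schur_theorem {G : Type*} [Group G] (C : Subgroup G)
    (hC : C ≤ Subgroup.center G) (h : Finite (G ⧸ C)) :
    Finite (commutator G) := by
  have hfin : Finite (commutatorSet G) := by
    let f : G ⧸ C → G ⧸ C → G :=
      Quotient.lift₂ (fun a b => ⁅a, b⁆) (by
        intro a b a' b' ha hb
        have ha' : a⁻¹ * a' ∈ C := QuotientGroup.leftRel_apply.mp ha
        have hb' : b⁻¹ * b' ∈ C := QuotientGroup.leftRel_apply.mp hb
        have := commutator_eq_of_central a b (a⁻¹ * a') (b⁻¹ * b') (hC ha') (hC hb')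
        simp only [mul_inv_cancel_left] at this
        exact this.symm)
    have hsub : commutatorSet G ⊆ Set.range (fun p : (G ⧸ C) × (G ⧸ C) => f p.1 p.2) := by
      rintro x ⟨a, b, rfl⟩
      exact ⟨(QuotientGroup.mk a, QuotientGroup.mk b), rfl⟩
    exact ((Set.finite_range _).subset hsub).to_subtype
  infer_instance
end

section
/- Let G be a group and k a positive integer. If the quotient group G/Z_k(G) is finite, then γ_{k+1}(G) is finite. -/
open Subgroup
open scoped commutatorElement

universe u

section Dietzmann
variable {G : Type u} [Group G] [DecidableEq G]



/-- Pull one occurrence of `x` to the front of a product over a conjugation-closed set. -/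
private lemma dietzmann_extract {Y : Set G} (hconj : ∀ y ∈ Y, ∀ g : G, g⁻¹ * y * g ∈ Y)
    (x : G) : ∀ l : List G, (∀ y ∈ l, y ∈ Y) → 0 < l.count x →
    ∃ l' : List G, (∀ y ∈ l', y ∈ Y) ∧ x * l'.prod = l.prod ∧
      l'.length + 1 = l.length ∧ l'.count x + 1 = l.count x := by
  intro l
  induction l with
  | nil => simp
  | cons y t ih =>
    intro hmem hc
    by_cases hyx : y = x
    · subst hyx
      exact ⟨t, fun z hz => hmem z (List.mem_cons_of_mem _ hz), by simp, by simp,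
        by simp [List.count_cons]⟩
    · have hct : 0 < t.count x := by
        simpa [List.count_cons, hyx] using hc
      obtain ⟨t', ht'mem, ht'prod, ht'len, ht'count⟩ :=
        ih (fun z hz => hmem z (List.mem_cons_of_mem _ hz)) hct
      refine ⟨(x⁻¹ * y * x) :: t', ?_, ?_, ?_, ?_⟩
      · rintro z hz
        rcases List.mem_cons.1 hz with rfl | hz
        · exact hconj y (hmem y (List.mem_cons_self (a := y) (l := t))) x
        · exact ht'mem z hz
      · simp only [List.prod_cons, ← ht'prod]
        group
      · simpa using ht'len
      · have hne : x⁻¹ * y * x ≠ x := by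
          intro h
          apply hyx
          have := congrArg (fun z => x * z * x⁻¹) h
          simpa [mul_assoc] using this
        simp only [List.count_cons, hne, if_neg, ht'count]
        simp [hyx, hne, ← ht'count, List.count_cons]

private lemma dietzmann_extract_pow {Y : Set G} (hconj : ∀ y ∈ Y, ∀ g : G, g⁻¹ * y * g ∈ Y)
    (x : G) : ∀ (c : ℕ) (l : List G), (∀ y ∈ l, y ∈ Y) → c ≤ l.count x →
    ∃ l' : List G, (∀ y ∈ l', y ∈ Y) ∧ x ^ c * l'.prod = l.prod ∧
      l'.length + c = l.length := by
  intro c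
  induction c with
  | zero => intro l hm _; exact ⟨l, hm, by simp, by simp⟩
  | succ n ih =>
    intro l hm hc
    obtain ⟨l₁, h₁m, h₁p, h₁len, h₁c⟩ := dietzmann_extract hconj x l hm
      (lt_of_lt_of_le (Nat.succ_pos n) hc)
    obtain ⟨l₂, h₂m, h₂p, h₂len⟩ := ih l₁ h₁m (by omega)
    refine ⟨l₂, h₂m, ?_, by omega⟩
    rw [pow_succ', mul_assoc, h₂p, h₁p]

private lemma dietzmann_reduce {Y : Set G} (hYfin : Y.Finite)
    (hconj : ∀ y ∈ Y, ∀ g : G, g⁻¹ * y * g ∈ Y) {N : ℕ} (hN : 0 < N)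
    (hord : ∀ y ∈ Y, y ^ N = 1) :
    ∀ l : List G, (∀ y ∈ l, y ∈ Y) →
    ∃ l' : List G, (∀ y ∈ l', y ∈ Y) ∧ l'.prod = l.prod ∧
      l'.length ≤ (N - 1) * hYfin.toFinset.card := by
  suffices h : ∀ (n : ℕ) (l : List G), l.length = n → (∀ y ∈ l, y ∈ Y) →
      ∃ l' : List G, (∀ y ∈ l', y ∈ Y) ∧ l'.prod = l.prod ∧
        l'.length ≤ (N - 1) * hYfin.toFinset.card by
    intro l; exact h l.length l rfl
  intro n
  induction n using Nat.strong_induction_on with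
  | _ n ih =>
  intro l hn hm
  subst hn
  by_cases hlen : l.length ≤ (N - 1) * hYfin.toFinset.card
  · exact ⟨l, hm, rfl, hlen⟩
  · -- pigeonhole: some y has count ≥ N
    have hsub : l.toFinset ⊆ hYfin.toFinset := by
      intro a ha
      rw [Set.Finite.mem_toFinset]
      exact hm a (List.mem_toFinset.1 ha)
    have hex : ∃ x ∈ l, N ≤ l.count x := by
      by_contra hcon
      push_neg at hcon
      apply hlen
      calc l.length = ∑ a ∈ l.toFinset, l.count a := by
            simpa using (Multiset.toFinset_sum_count_eq (l : Multiset G)).symm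
        _ ≤ ∑ _a ∈ l.toFinset, (N - 1) := by
            refine Finset.sum_le_sum fun a ha => ?_
            have := hcon a (List.mem_toFinset.1 ha)
            omega
        _ = (N - 1) * l.toFinset.card := by rw [Finset.sum_const, smul_eq_mul, mul_comm]
        _ ≤ (N - 1) * hYfin.toFinset.card :=
            Nat.mul_le_mul_left _ (Finset.card_le_card hsub)
    obtain ⟨x, hxl, hxc⟩ := hex
    obtain ⟨l₁, h₁m, h₁p, h₁len⟩ := dietzmann_extract_pow hconj x N l hm hxc
    have hlt : l₁.length < l.length := by omega
    obtain ⟨l₂, h₂m, h₂p, h₂len⟩ := ih l₁.length hlt l₁ rfl h₁m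
    refine ⟨l₂, h₂m, ?_, h₂len⟩
    rw [h₂p, ← h₁p, hord x (hm x hxl), one_mul]

/-- **Dietzmann's Lemma**: a finite conjugation-closed set of torsion elements
generates a finite subgroup. -/
theorem dietzmann_lemma {X : Set G} (hX : X.Finite)
    (hconj : ∀ x ∈ X, ∀ g : G, g⁻¹ * x * g ∈ X)
    (htor : ∀ x ∈ X, ∃ n : ℕ, 0 < n ∧ x ^ n = 1) :
    (Subgroup.closure X : Set G).Finite := by
  set Y : Set G := X ∪ X⁻¹ with hYdef
  have hYfin : Y.Finite := hX.union hX.inv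
  have hXY : ∀ y ∈ Y, y ∈ X ∨ y⁻¹ ∈ X := by
    intro y hy
    rcases hy with hy | hy
    · exact Or.inl hy
    · exact Or.inr hy
  have hYconj : ∀ y ∈ Y, ∀ g : G, g⁻¹ * y * g ∈ Y := by
    rintro y (hy | hy) g
    · exact Or.inl (hconj y hy g)
    · refine Or.inr ?_
      rw [Set.mem_inv] at hy ⊢
      simpa [mul_assoc] using hconj y⁻¹ hy g
  have hYtor : ∀ y ∈ Y, ∃ n : ℕ, 0 < n ∧ y ^ n = 1 := by
    rintro y (hy | hy)
    · exact htor y hy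
    · obtain ⟨n, hn, h1⟩ := htor y⁻¹ hy
      exact ⟨n, hn, by rw [← inv_inv y, inv_pow, h1, inv_one]⟩
  have hfo : ∀ y ∈ hYfin.toFinset, 0 < orderOf y := by
    intro y hy
    rw [Set.Finite.mem_toFinset] at hy
    obtain ⟨n, hn, h1⟩ := hYtor y hy
    exact (isOfFinOrder_iff_pow_eq_one.2 ⟨n, hn, h1⟩).orderOf_pos
  set N : ℕ := ∏ y ∈ hYfin.toFinset, orderOf y with hNdef
  have hN : 0 < N := Finset.prod_pos hfo
  have hord : ∀ y ∈ Y, y ^ N = 1 := by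
    intro y hy
    exact orderOf_dvd_iff_pow_eq_one.1
      (Finset.dvd_prod_of_mem _ (hYfin.mem_toFinset.2 hy))
  set B : ℕ := (N - 1) * hYfin.toFinset.card with hBdef
  haveI : Finite ↥Y := hYfin.to_subtype
  have hbig : ((fun l : List ↥Y => (l.map Subtype.val).prod) ''
      {l : List ↥Y | l.length ≤ B}).Finite :=
    (List.finite_length_le ↥Y B).image _
  refine hbig.subset ?_
  intro x hx
  have hx' : x ∈ Submonoid.closure Y := by
    have := Subgroup.closure_toSubmonoid X
    have hx2 : x ∈ (Subgroup.closure X).toSubmonoid := hx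
    rwa [this] at hx2
  obtain ⟨l, hlmem, hlprod⟩ := Submonoid.exists_list_of_mem_closure hx'
  obtain ⟨l', hl'mem, hl'prod, hl'len⟩ := dietzmann_reduce hYfin hYconj hN hord l hlmem
  refine ⟨l'.attach.map fun p => (⟨p.1, hl'mem p.1 p.2⟩ : ↥Y), ?_, ?_⟩
  · simpa using hl'len
  · simp only [List.map_map]
    have : (l'.attach.map fun p => ((⟨p.1, hl'mem p.1 p.2⟩ : ↥Y) : G)) = l' := by
      simp
    simpa [List.map_map] using this ▸ (hl'prod.trans hlprod)

end Dietzmann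

section CentralSeries
variable {G : Type u} [Group G]



/-- Three subgroups lemma, modulo a normal subgroup. -/
private lemma three_subgroups_le {H₁ H₂ H₃ N : Subgroup G} [N.Normal]
    (h1 : ⁅⁅H₂, H₃⁆, H₁⁆ ≤ N) (h2 : ⁅⁅H₃, H₁⁆, H₂⁆ ≤ N) : ⁅⁅H₁, H₂⁆, H₃⁆ ≤ N := by
  let π := QuotientGroup.mk' N
  have key : ∀ A B C : Subgroup G, ⁅⁅A, B⁆, C⁆ ≤ N ↔
      ⁅⁅Subgroup.map π A, Subgroup.map π B⁆, Subgroup.map π C⁆ = ⊥ := by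
    intro A B C
    rw [← Subgroup.map_commutator, ← Subgroup.map_commutator, Subgroup.map_eq_bot_iff,
      QuotientGroup.ker_mk']
  rw [key]
  exact Subgroup.commutator_commutator_eq_bot_of_rotate
    ((key _ _ _).1 h1) ((key _ _ _).1 h2)

private lemma commutator_top_ucs_le (n : ℕ) :
    ⁅(⊤ : Subgroup G), Subgroup.upperCentralSeries G (n + 1)⁆ ≤ Subgroup.upperCentralSeries G n := by
  rw [Subgroup.commutator_le]
  intro x _ y hy
  have h := (Subgroup.mem_upperCentralSeries_succ_iff).1 hy x
  have : ⁅x, y⁆ = (y * x * y⁻¹ * x⁻¹)⁻¹ := by group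
  rw [this]
  exact inv_mem h

private lemma commutator_lcs_ucs_le (k : ℕ) : ∀ j : ℕ,
    ⁅(⊤ : Subgroup G).lowerCentralSeries k, Subgroup.upperCentralSeries G (k + j + 1)⁆ ≤ Subgroup.upperCentralSeries G j := by
  induction k with
  | zero =>
    intro j
    have e : 0 + j + 1 = j + 1 := by omega
    rw [e]
    simpa using commutator_top_ucs_le (G := G) j
  | succ k ih =>
    intro j
    have e : k + 1 + j + 1 = k + (j + 1) + 1 := by omega
    rw [e]
    show ⁅⁅(⊤ : Subgroup G).lowerCentralSeries k, ⊤⁆, Subgroup.upperCentralSeries G (k + (j + 1) + 1)⁆ ≤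
      Subgroup.upperCentralSeries G j
    apply three_subgroups_le
    · calc ⁅⁅(⊤ : Subgroup G), Subgroup.upperCentralSeries G (k + (j + 1) + 1)⁆, (⊤ : Subgroup G).lowerCentralSeries k⁆
          ≤ ⁅Subgroup.upperCentralSeries G (k + (j + 1)), (⊤ : Subgroup G).lowerCentralSeries k⁆ :=
            Subgroup.commutator_mono (commutator_top_ucs_le _) le_rfl
        _ = ⁅(⊤ : Subgroup G).lowerCentralSeries k, Subgroup.upperCentralSeries G (k + j + 1)⁆ := by
            rw [Subgroup.commutator_comm]; rfl
        _ ≤ Subgroup.upperCentralSeries G j := ih j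
    · calc ⁅⁅Subgroup.upperCentralSeries G (k + (j + 1) + 1), (⊤ : Subgroup G).lowerCentralSeries k⁆, (⊤ : Subgroup G)⁆
          = ⁅⁅(⊤ : Subgroup G).lowerCentralSeries k, Subgroup.upperCentralSeries G (k + (j + 1) + 1)⁆, (⊤ : Subgroup G)⁆ := by
            rw [Subgroup.commutator_comm (Subgroup.upperCentralSeries G (k + (j + 1) + 1))]
        _ ≤ ⁅Subgroup.upperCentralSeries G (j + 1), (⊤ : Subgroup G)⁆ :=
            Subgroup.commutator_mono (ih (j + 1)) le_rfl
        _ = ⁅(⊤ : Subgroup G), Subgroup.upperCentralSeries G (j + 1)⁆ := Subgroup.commutator_comm _ _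
        _ ≤ Subgroup.upperCentralSeries G j := commutator_top_ucs_le _

private lemma commutator_lcs_ucs_eq_bot (k : ℕ) :
    ⁅(⊤ : Subgroup G).lowerCentralSeries k, Subgroup.upperCentralSeries G (k + 1)⁆ = ⊥ := by
  have h := commutator_lcs_ucs_le (G := G) k 0
  rw [← le_bot_iff]
  simpa using h

/-- lower central series maps onto that of a quotient -/
private lemma map_lowerCentralSeries_eq {H : Type*} [Group H] (f : G →* H)
    (hf : Function.Surjective f) (n : ℕ) :
    Subgroup.map f ((⊤ : Subgroup G).lowerCentralSeries n) = (⊤ : Subgroup H).lowerCentralSeries n := by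
  induction n with
  | zero => exact Subgroup.map_top_of_surjective f hf
  | succ n ih =>
    show Subgroup.map f ⁅(⊤ : Subgroup G).lowerCentralSeries n, ⊤⁆ = ⁅(⊤ : Subgroup H).lowerCentralSeries n, ⊤⁆
    rw [Subgroup.map_commutator, ih, Subgroup.map_top_of_surjective f hf]



private lemma comm_mul_center_left (f y z : G) (hz : z ∈ Subgroup.center G) :
    ⁅f * z, y⁆ = ⁅f, y⁆ := by
  have hzy : z * y = y * z := (Subgroup.mem_center_iff.1 hz y).symm
  simp [commutatorElement_def, mul_inv_rev, mul_assoc, hzy]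

private lemma comm_mul_commute_right (f x u : G) (hu : Commute f u) :
    ⁅f, x * u⁆ = ⁅f, x⁆ := by
  have hu' : u * f⁻¹ = f⁻¹ * u := (hu.inv_left).symm.eq
  simp [commutatorElement_def, mul_inv_rev, mul_assoc, hu']

private lemma comm_shift (f x z u : G) (hz : z ∈ Subgroup.center G) (hu : Commute f u) :
    ⁅f * z, x * u⁆ = ⁅f, x⁆ := by
  rw [comm_mul_center_left _ _ _ hz, comm_mul_commute_right _ _ _ hu]

private lemma finite_commutatorSet_of_finite_quotient_center
    (h : Finite (G ⧸ Subgroup.center G)) : Finite (commutatorSet G) := by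
  have : commutatorSet G ⊆ Set.range
      (fun p : (G ⧸ Subgroup.center G) × (G ⧸ Subgroup.center G) =>
        ⁅p.1.out, p.2.out⁆) := by
    rintro g ⟨a, b, rfl⟩
    refine ⟨(QuotientGroup.mk a, QuotientGroup.mk b), ?_⟩
    simp only
    have ha : ((QuotientGroup.mk a : G ⧸ Subgroup.center G)).out = a * (a⁻¹ * (QuotientGroup.mk a : G ⧸ Subgroup.center G).out) := by group
    have hza : a⁻¹ * (QuotientGroup.mk a : G ⧸ Subgroup.center G).out ∈ Subgroup.center G := by
      rw [← QuotientGroup.eq]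
      exact (QuotientGroup.out_eq' _).symm
    have hb : ((QuotientGroup.mk b : G ⧸ Subgroup.center G)).out = b * (b⁻¹ * (QuotientGroup.mk b : G ⧸ Subgroup.center G).out) := by group
    have hzb : b⁻¹ * (QuotientGroup.mk b : G ⧸ Subgroup.center G).out ∈ Subgroup.center G := by
      rw [← QuotientGroup.eq]
      exact (QuotientGroup.out_eq' _).symm
    rw [ha, hb, comm_shift _ _ _ _ hza]
    exact Subgroup.mem_center_iff.1 hzb a
  exact Set.Finite.to_subtype ((Set.finite_range _).subset this)

private lemma finite_commutator_of_finite_quotient_center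
    (h : Finite (G ⧸ Subgroup.center G)) : Finite (_root_.commutator G) := by
  haveI := finite_commutatorSet_of_finite_quotient_center h
  infer_instance

-- placeholders for previously proven lemmas
private lemma baer_step (k : ℕ)
    (hquot : Finite (G ⧸ Subgroup.upperCentralSeries G (k + 1)))
    (hF : Finite (Subgroup.map (QuotientGroup.mk' (Subgroup.center G))
      ((⊤ : Subgroup G).lowerCentralSeries k))) :
    Finite ((⊤ : Subgroup G).lowerCentralSeries (k + 1)) := by
  classical
  set F := (⊤ : Subgroup G).lowerCentralSeries k with hFdef
  set U := Subgroup.upperCentralSeries G (k + 1) with hUdef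
  haveI : F.Normal := Subgroup.lowerCentralSeries_normal ⊤ k
  have hcomm : ∀ f ∈ F, ∀ u ∈ U, Commute f u := by
    intro f hf u hu
    have hb := commutator_lcs_ucs_eq_bot (G := G) k
    have h1 : ⁅f, u⁆ ∈ (⊥ : Subgroup G) := by
      rw [← hb]; exact Subgroup.commutator_mem_commutator hf hu
    exact commutatorElement_eq_one_iff_commute.1 (Subgroup.mem_bot.1 h1)
  -- Step 1: `F ⧸ center F` is finite, so `⁅F,F⁆` is finite (Schur)
  have hFc : Finite (F ⧸ Subgroup.center F) := by
    let φ : F →* G ⧸ U := (QuotientGroup.mk' U).comp F.subtype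
    have hker : φ.ker ≤ Subgroup.center F := by
      intro x hx
      rw [MonoidHom.mem_ker, MonoidHom.comp_apply] at hx
      have hxU : (x : G) ∈ U := by
        rwa [← QuotientGroup.ker_mk' U, MonoidHom.mem_ker]
      rw [Subgroup.mem_center_iff]
      intro y
      exact Subtype.ext ((hcomm y y.2 x hxU).eq)
    haveI : Finite (F ⧸ φ.ker) :=
      Finite.of_equiv _ (QuotientGroup.quotientKerEquivRange φ).symm.toEquiv
    haveI := Subgroup.finiteIndex_of_finite_quotient (H := φ.ker)
    haveI := Subgroup.finiteIndex_of_le hker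
    exact Subgroup.finite_quotient_of_finiteIndex
  haveI hFcm : Finite (_root_.commutator F) := finite_commutator_of_finite_quotient_center hFc
  set N : Subgroup G := ⁅F, F⁆ with hNdef
  haveI hNnormal : N.Normal := Subgroup.commutator_normal F F
  haveI hNfin : Finite N := by
    have h2 : N = Subgroup.map F.subtype (_root_.commutator F) := by
      rw [_root_.commutator_def, Subgroup.map_commutator]
      congr 1 <;>
        rw [← MonoidHom.range_eq_map, Subgroup.range_subtype]
    rw [h2]
    have h3 : ((_root_.commutator F : Subgroup F) : Set F).Finite := Set.toFinite _
    exact Set.Finite.to_subtype (by rw [Subgroup.coe_map]; exact h3.image _)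
  -- Step 2: pass to `Ḡ = G ⧸ N`
  let Gbar := G ⧸ N
  let π : G →* Gbar := QuotientGroup.mk' N
  have hπs : Function.Surjective π := QuotientGroup.mk'_surjective N
  set Fbar : Subgroup Gbar := Subgroup.map π F with hFbardef
  haveI hFbarn : Fbar.Normal := Subgroup.Normal.map ‹F.Normal› π hπs
  have hFbarab : ∀ a ∈ Fbar, ∀ b ∈ Fbar, Commute a b := by
    intro a ha b hb
    have h4 : ⁅Fbar, Fbar⁆ = ⊥ := by
      rw [← Subgroup.map_commutator, ← hNdef, Subgroup.map_eq_bot_iff,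
        QuotientGroup.ker_mk']
    have h5 : ⁅a, b⁆ ∈ (⊥ : Subgroup Gbar) := h4 ▸ Subgroup.commutator_mem_commutator ha hb
    exact commutatorElement_eq_one_iff_commute.1 (Subgroup.mem_bot.1 h5)
  -- the set of commutators ⁅Fbar, Gbar⁆
  set S : Set Gbar := {x | ∃ p ∈ Fbar, ∃ q ∈ (⊤ : Subgroup Gbar), ⁅p, q⁆ = x} with hSdef
  -- S is finite
  have hrep : ∀ q : Subgroup.map (QuotientGroup.mk' (Subgroup.center G)) F,
      ∃ f : G, f ∈ F ∧ QuotientGroup.mk' (Subgroup.center G) f = (q : G ⧸ Subgroup.center G) := by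
    rintro ⟨q, hq⟩
    obtain ⟨f, hf, hfq⟩ := Subgroup.mem_map.1 hq
    exact ⟨f, hf, hfq⟩
  choose rep hrepF hrepmk using hrep
  have hSfin : S.Finite := by
    have hsub : S ⊆ Set.range (fun p : (Subgroup.map (QuotientGroup.mk' (Subgroup.center G)) F)
        × (G ⧸ U) => π ⁅rep p.1, p.2.out⁆) := by
      rintro x ⟨p, hp, q, -, rfl⟩
      obtain ⟨f, hf, rfl⟩ := Subgroup.mem_map.1 hp
      obtain ⟨y, rfl⟩ := hπs q
      refine ⟨(⟨QuotientGroup.mk' (Subgroup.center G) f,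
        Subgroup.mem_map_of_mem _ hf⟩, QuotientGroup.mk y), ?_⟩
      simp only
      set p0 : Subgroup.map (QuotientGroup.mk' (Subgroup.center G)) F :=
        ⟨QuotientGroup.mk' (Subgroup.center G) f, Subgroup.mem_map_of_mem _ hf⟩ with hp0
      have hz : f⁻¹ * rep p0 ∈ Subgroup.center G := by
        rw [← QuotientGroup.eq]
        exact (hrepmk p0).symm
      have hw : y⁻¹ * (QuotientGroup.mk y : G ⧸ U).out ∈ U := by
        rw [← QuotientGroup.eq]
        exact (QuotientGroup.out_eq' _).symm
      have heq : ⁅rep p0, (QuotientGroup.mk y : G ⧸ U).out⁆ = ⁅f, y⁆ := by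
        have e1 : rep p0 = f * (f⁻¹ * rep p0) := by group
        have e2 : (QuotientGroup.mk y : G ⧸ U).out = y * (y⁻¹ * (QuotientGroup.mk y : G ⧸ U).out) := by
          group
        rw [e1, e2]
        exact comm_shift _ _ _ _ hz (hcomm f hf _ hw)
      rw [heq, map_commutatorElement]
    haveI : Finite (G ⧸ U) := hquot
    exact (Set.finite_range _).subset hsub
  -- S is closed under conjugation
  have hSconj : ∀ x ∈ S, ∀ g : Gbar, g⁻¹ * x * g ∈ S := by
    rintro x ⟨p, hp, q, -, rfl⟩ g
    refine ⟨g⁻¹ * p * g, ?_, g⁻¹ * q * g, Subgroup.mem_top _, ?_⟩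
    · have h := hFbarn.conj_mem p hp g⁻¹
      rwa [_root_.inv_inv] at h
    · have h5 := conjugate_commutatorElement p q g⁻¹
      rw [_root_.inv_inv] at h5
      exact h5.symm
  -- S consists of torsion elements
  have hStor : ∀ x ∈ S, ∃ n : ℕ, 0 < n ∧ x ^ n = 1 := by
    -- construct the finite group `Fbar Z(Gbar) / Z(Gbar)`
    have hcen : ∀ z ∈ Subgroup.center G, π z ∈ Subgroup.center Gbar := by
      intro z hz
      rw [Subgroup.mem_center_iff]
      intro b
      obtain ⟨y, rfl⟩ := hπs b
      rw [← map_mul, ← map_mul, Subgroup.mem_center_iff.1 hz y]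
    let μ : G →* Gbar ⧸ Subgroup.center Gbar :=
      (QuotientGroup.mk' (Subgroup.center Gbar)).comp π
    have hμker : Subgroup.center G ≤ μ.ker := by
      intro z hz
      have h6 : π z ∈ Subgroup.center Gbar := hcen z hz
      rw [MonoidHom.mem_ker, MonoidHom.comp_apply, QuotientGroup.mk'_apply,
        QuotientGroup.eq_one_iff]
      exact h6
    let ρ : G ⧸ Subgroup.center G →* Gbar ⧸ Subgroup.center Gbar :=
      QuotientGroup.lift (Subgroup.center G) μ hμker
    set M := Subgroup.map ρ (Subgroup.map (QuotientGroup.mk' (Subgroup.center G)) F) with hMdef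
    haveI hMfin : Finite M := by
      have : (M : Set (Gbar ⧸ Subgroup.center Gbar)) =
          ρ '' (Subgroup.map (QuotientGroup.mk' (Subgroup.center G)) F) := by
        rw [hMdef, Subgroup.coe_map]
      exact Set.Finite.to_subtype (this ▸ (Set.toFinite _).image ρ)
    have hMeq : M = Subgroup.map (QuotientGroup.mk' (Subgroup.center Gbar)) Fbar := by
      rw [hMdef, hFbardef, Subgroup.map_map, Subgroup.map_map]
      rfl
    set n : ℕ := Nat.card M with hndef
    have hn : 0 < n := Nat.card_pos
    have hcentral : ∀ a ∈ Fbar, a ^ n ∈ Subgroup.center Gbar := by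
      intro a ha
      have hmem : QuotientGroup.mk' (Subgroup.center Gbar) a ∈ M := by
        rw [hMeq]; exact Subgroup.mem_map_of_mem _ ha
      have hp1 : (⟨_, hmem⟩ : M) ^ n = 1 := pow_card_eq_one'
      have hp2 : QuotientGroup.mk' (Subgroup.center Gbar) (a ^ n) = 1 := by
        have h10 := congrArg Subtype.val hp1
        simp only [SubgroupClass.coe_pow, OneMemClass.coe_one] at h10
        rw [map_pow]
        exact h10
      rwa [QuotientGroup.mk'_apply, QuotientGroup.eq_one_iff] at hp2
    rintro x ⟨p, hp, q, -, rfl⟩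
    refine ⟨n, hn, ?_⟩
    have hb : q * p⁻¹ * q⁻¹ ∈ Fbar := by
      simpa using hFbarn.conj_mem p⁻¹ (inv_mem hp) q
    have hx : ⁅p, q⁆ = p * (q * p⁻¹ * q⁻¹) := by
      rw [commutatorElement_def]; group
    have hcpq : Commute p (q * p⁻¹ * q⁻¹) := hFbarab p hp _ hb
    rw [hx, hcpq.mul_pow]
    have hconjpow : (q * p⁻¹ * q⁻¹) ^ n = q * (p ^ n)⁻¹ * q⁻¹ := by
      have h9 : (MulAut.conj q) (p⁻¹ ^ n) = ((MulAut.conj q) p⁻¹) ^ n := map_pow _ _ _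
      simp only [MulAut.conj_apply] at h9
      rw [← inv_pow]
      exact h9.symm
    rw [hconjpow]
    have hfix : q * (p ^ n)⁻¹ * q⁻¹ = (p ^ n)⁻¹ := by
      have h6 := Subgroup.mem_center_iff.1 (inv_mem (hcentral p hp)) q
      rw [h6]; group
    rw [hfix, mul_inv_cancel]
  -- Dietzmann: the commutator subgroup ⁅Fbar, ⊤⁆ is finite
  have hclosfin : (Subgroup.closure S : Set Gbar).Finite :=
    dietzmann_lemma hSfin hSconj hStor
  have hlcsbar : Finite ((⊤ : Subgroup Gbar).lowerCentralSeries (k + 1)) := by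
    have h7 : (⊤ : Subgroup Gbar).lowerCentralSeries (k + 1) = Subgroup.closure S := by
      show ⁅(⊤ : Subgroup Gbar).lowerCentralSeries k, ⊤⁆ = _
      rw [← map_lowerCentralSeries_eq π hπs k, Subgroup.commutator_def, ← hFbardef, ← hSdef]
    rw [h7]
    exact hclosfin.to_subtype
  -- pull back along π
  set L := (⊤ : Subgroup G).lowerCentralSeries (k + 1) with hLdef
  have hLbar : Subgroup.map π L = (⊤ : Subgroup Gbar).lowerCentralSeries (k + 1) :=
    map_lowerCentralSeries_eq π hπs (k + 1)
  have hLsub : (L : Set G) ⊆ ⋃ q : Subgroup.map π L,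
      (fun m : G => ((q : Gbar)).out * m) '' (N : Set G) := by
    intro g hg
    refine Set.mem_iUnion.2 ⟨⟨π g, Subgroup.mem_map_of_mem _ hg⟩, ?_⟩
    refine ⟨(π g : Gbar).out⁻¹ * g, ?_, by group⟩
    have h8 : π ((π g : Gbar).out⁻¹ * g) = 1 := by
      rw [map_mul, map_inv]
      have : π ((π g : Gbar).out) = π g := QuotientGroup.out_eq' _
      rw [this, inv_mul_cancel]
    exact (QuotientGroup.eq_one_iff _).1 h8
  haveI : Finite (Subgroup.map π L) := by rw [hLbar]; exact hlcsbar
  have hfin : (L : Set G).Finite := by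
    refine Set.Finite.subset (Set.finite_iUnion fun q => (Set.toFinite (N : Set G)).image _) hLsub
  exact hfin.to_subtype

end CentralSeries

private lemma baer_aux : ∀ (k : ℕ) (G : Type u) [Group G],
    Finite (G ⧸ Subgroup.upperCentralSeries G (k + 1)) → Finite ((⊤ : Subgroup G).lowerCentralSeries (k + 1)) := by
  intro k
  induction k with
  | zero =>
    intro G _ h
    have hc : Finite (G ⧸ Subgroup.center G) := by
      have e : Subgroup.upperCentralSeries G 1 = Subgroup.center G := Subgroup.upperCentralSeries_one G
      exact Finite.of_equiv _ (QuotientGroup.quotientMulEquivOfEq e).toEquiv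
    apply baer_step 0 h
    rw [show (⊤ : Subgroup G).lowerCentralSeries 0 = ⊤ from rfl,
      Subgroup.map_top_of_surjective _ (QuotientGroup.mk'_surjective _)]
    exact inferInstance
  | succ n ih =>
    intro G _ h
    apply baer_step (n + 1) h
    -- need : Finite (map (mk' (center G)) ((⊤ : Subgroup G).lowerCentralSeries (n+1)))
    set Z := Subgroup.center G
    set Gbar := G ⧸ Z
    have hZle : Z ≤ Subgroup.upperCentralSeries G (n + 2) := by
      have := Subgroup.upperCentralSeries_one G
      calc Z = Subgroup.upperCentralSeries G 1 := (Subgroup.upperCentralSeries_one G).symm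
        _ ≤ Subgroup.upperCentralSeries G (n + 2) := Subgroup.upperCentralSeries_mono G (by omega)
    have hmapU : Subgroup.map (QuotientGroup.mk' Z) (Subgroup.upperCentralSeries G (n + 2)) =
        Subgroup.upperCentralSeries Gbar (n + 1) := by
      rw [← Subgroup.comap_upperCentralSeries_quotient_center (n + 1)]
      exact Subgroup.map_comap_eq_self_of_surjective (QuotientGroup.mk'_surjective _) _
    have hfin2 : Finite (Gbar ⧸ Subgroup.upperCentralSeries Gbar (n + 1)) := by
      have e1 := QuotientGroup.quotientQuotientEquivQuotient Z (Subgroup.upperCentralSeries G (n + 2)) hZle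
      have : Finite ((G ⧸ Z) ⧸ Subgroup.map (QuotientGroup.mk' Z) (Subgroup.upperCentralSeries G (n + 2))) :=
        Finite.of_equiv _ e1.symm.toEquiv
      rwa [hmapU] at this
    have hres := ih Gbar hfin2
    have hmapL : Subgroup.map (QuotientGroup.mk' Z) ((⊤ : Subgroup G).lowerCentralSeries (n + 1)) =
        (⊤ : Subgroup Gbar).lowerCentralSeries (n + 1) :=
      map_lowerCentralSeries_eq _ (QuotientGroup.mk'_surjective _) _
    rw [hmapL]
    exact hres

/-- **Baer's Theorem.** If `G ⧸ Z_k(G)` is finite for a positive integer `k`, then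
`γ_{k+1}(G)` (i.e. `(⊤ : Subgroup G).lowerCentralSeries k`, since `γ_1(G) = (⊤ : Subgroup G).lowerCentralSeries 0 = G`)
is finite. -/
theorem baer_theorem {G : Type*} [Group G] (k : ℕ) (hk : 0 < k)
    (h : Finite (G ⧸ Subgroup.upperCentralSeries G k)) :
    Finite ((⊤ : Subgroup G).lowerCentralSeries k) := by
  cases k with
  | zero => omega
  | succ m => exact baer_aux m G h
end

section
/- Let 1 → N → H → G → 1 be an extension of groups (i.e., a surjective group homomorphism H → G with kernel N) such that N ≤ Z_n(H) for a fixed positive integer n. If G is a perfect group, then γ_{n+1}(H) is a perfect group. -/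
open Subgroup Pointwise
open scoped commutatorElement

/-- Three subgroups lemma modulo a normal subgroup. -/
private lemma three_subgroups_mod {H : Type*} [Group H] (A B C N : Subgroup H) [N.Normal]
    (h1 : ⁅⁅B, C⁆, A⁆ ≤ N) (h2 : ⁅⁅C, A⁆, B⁆ ≤ N) : ⁅⁅A, B⁆, C⁆ ≤ N := by
  set π := QuotientGroup.mk' N with hπ
  have key : ⁅⁅A.map π, B.map π⁆, C.map π⁆ = ⊥ := by
    apply Subgroup.commutator_commutator_eq_bot_of_rotate
    · rw [← map_commutator, ← map_commutator, Subgroup.map_eq_bot_iff, QuotientGroup.ker_mk']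
      exact h1
    · rw [← map_commutator, ← map_commutator, Subgroup.map_eq_bot_iff, QuotientGroup.ker_mk']
      exact h2
  rw [← map_commutator, ← map_commutator, Subgroup.map_eq_bot_iff, QuotientGroup.ker_mk'] at key
  exact key

private lemma ucs_comm_top {H : Type*} [Group H] (k : ℕ) :
    ⁅Subgroup.upperCentralSeries H k, (⊤ : Subgroup H)⁆ ≤ Subgroup.upperCentralSeries H (k - 1) := by
  cases k with
  | zero =>
    rw [Subgroup.upperCentralSeries_zero, Subgroup.commutator_le]
    intro g hg h _
    simp only [Subgroup.mem_bot] at hg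
    simp [hg]
  | succ m =>
    rw [Subgroup.commutator_le]
    intro g hg h _
    simpa using (Subgroup.mem_upperCentralSeries_succ_iff.mp hg h)

private lemma lcs_ucs {H : Type*} [Group H] (j k : ℕ) :
    ⁅(⊤ : Subgroup H).lowerCentralSeries j, Subgroup.upperCentralSeries H k⁆ ≤ Subgroup.upperCentralSeries H (k - j) := by
  induction j generalizing k with
  | zero =>
    rw [Subgroup.lowerCentralSeries_zero, Subgroup.commutator_le]
    intro g _ z hz
    have := (inferInstance : (Subgroup.upperCentralSeries H k).Normal).conj_mem z hz g
    have h2 := (Subgroup.upperCentralSeries H k).mul_mem this (inv_mem hz)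
    simpa [commutatorElement_def, mul_assoc] using h2
  | succ j ih =>
    have hdef : ((⊤ : Subgroup H).lowerCentralSeries (j + 1)) = ⁅(⊤ : Subgroup H).lowerCentralSeries j, (⊤ : Subgroup H)⁆ := rfl
    rw [hdef]
    apply three_subgroups_mod (N := Subgroup.upperCentralSeries H (k - (j + 1)))
    · calc ⁅⁅(⊤ : Subgroup H), Subgroup.upperCentralSeries H k⁆, (⊤ : Subgroup H).lowerCentralSeries j⁆
          ≤ ⁅Subgroup.upperCentralSeries H (k - 1), (⊤ : Subgroup H).lowerCentralSeries j⁆ :=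
            Subgroup.commutator_mono ((Subgroup.commutator_comm _ _).le.trans (ucs_comm_top k))
              le_rfl
        _ = ⁅(⊤ : Subgroup H).lowerCentralSeries j, Subgroup.upperCentralSeries H (k-1)⁆ := Subgroup.commutator_comm _ _
        _ ≤ Subgroup.upperCentralSeries H (k - 1 - j) := ih (k-1)
        _ = Subgroup.upperCentralSeries H (k - (j+1)) := by congr 1; omega
    · calc ⁅⁅Subgroup.upperCentralSeries H k, (⊤ : Subgroup H).lowerCentralSeries j⁆, (⊤ : Subgroup H)⁆
          ≤ ⁅Subgroup.upperCentralSeries H (k - j), (⊤ : Subgroup H)⁆ :=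
            Subgroup.commutator_mono ((Subgroup.commutator_comm _ _).le.trans (ih k)) le_rfl
        _ ≤ Subgroup.upperCentralSeries H (k - j - 1) := ucs_comm_top _
        _ = Subgroup.upperCentralSeries H (k - (j+1)) := by rw [Nat.sub_sub]

/-- Splitting a sup on the left of a commutator with `⊤`. -/
private lemma commutator_sup_top_le {H : Type*} [Group H] (A B D : Subgroup H)
    [B.Normal] [D.Normal] (hB : ⁅B, (⊤ : Subgroup H)⁆ ≤ D) :
    ⁅A ⊔ B, (⊤ : Subgroup H)⁆ ≤ ⁅A, (⊤ : Subgroup H)⁆ ⊔ D := by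
  rw [Subgroup.commutator_le]
  intro g hg h _
  have hg' : g ∈ (A : Set H) * (B : Set H) := by
    rw [← Subgroup.mul_normal]; exact hg
  obtain ⟨a, ha, b, hb, rfl⟩ := hg'
  have key : ⁅a * b, h⁆ = (a * ⁅b, h⁆ * a⁻¹) * ⁅a, h⁆ := by
    simp only [commutatorElement_def]; group
  rw [key]
  refine mul_mem (Subgroup.mem_sup_right ?_) (Subgroup.mem_sup_left (Subgroup.commutator_mem_commutator ha trivial))
  exact Subgroup.Normal.conj_mem ‹D.Normal› _ (hB (Subgroup.commutator_mem_commutator hb trivial)) a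

/-- If `p : H → G` is a surjective group homomorphism whose kernel is contained in the
`n`-th term of the upper central series of `H` (for a positive integer `n`), and `G` is
perfect, then `γ_{n+1}(H) = (⊤ : Subgroup H).lowerCentralSeries n` is a perfect group. -/
theorem perfect_lowerCentralSeries_of_ker_le_upperCentralSeries
    {H G : Type*} [Group H] [Group G] (p : H →* G) (hp : Function.Surjective p)
    (n : ℕ) (hn : 0 < n) (hker : p.ker ≤ Subgroup.upperCentralSeries H n)
    (hG : commutator G = ⊤) :
    commutator ((⊤ : Subgroup H).lowerCentralSeries n) = ⊤ := by
  -- Step 1: H = [H,H] ⊔ Z_n(H)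
  have hB0 : (⊤ : Subgroup H) ≤ (⊤ : Subgroup H).lowerCentralSeries 1 ⊔ Subgroup.upperCentralSeries H n := by
    intro x _
    have hx : p x ∈ commutator G := hG ▸ Subgroup.mem_top _
    have hmap : Subgroup.map p (commutator H) = commutator G := by
      rw [_root_.commutator_def, _root_.commutator_def, map_commutator, Subgroup.map_top_of_surjective p hp]
    rw [← hmap] at hx
    obtain ⟨y, hy, hyx⟩ := hx
    have hk : y⁻¹ * x ∈ p.ker := by
      rw [MonoidHom.mem_ker, map_mul, map_inv, hyx, inv_mul_cancel]
    have : x = y * (y⁻¹ * x) := by group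
    rw [this]
    exact mul_mem (Subgroup.mem_sup_left (by rwa [top_lowerCentralSeries_one])) (Subgroup.mem_sup_right (hker hk))
  -- Step 2: L_k ≤ L_{k+1} ⊔ Z_{n-k} for all k
  have hB : ∀ k : ℕ, (⊤ : Subgroup H).lowerCentralSeries k ≤
      (⊤ : Subgroup H).lowerCentralSeries (k + 1) ⊔ Subgroup.upperCentralSeries H (n - k) := by
    intro k
    induction k with
    | zero => simpa [Subgroup.lowerCentralSeries_zero] using hB0
    | succ k ih =>
      have hdef : (⊤ : Subgroup H).lowerCentralSeries (k + 1) =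
          ⁅(⊤ : Subgroup H).lowerCentralSeries k, (⊤ : Subgroup H)⁆ := rfl
      calc (⊤ : Subgroup H).lowerCentralSeries (k + 1)
          = ⁅(⊤ : Subgroup H).lowerCentralSeries k, (⊤ : Subgroup H)⁆ := hdef
        _ ≤ ⁅(⊤ : Subgroup H).lowerCentralSeries (k+1) ⊔ Subgroup.upperCentralSeries H (n-k), (⊤ : Subgroup H)⁆ :=
            Subgroup.commutator_mono ih le_rfl
        _ ≤ ⁅(⊤ : Subgroup H).lowerCentralSeries (k+1), (⊤ : Subgroup H)⁆ ⊔ Subgroup.upperCentralSeries H (n-k-1) :=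
            commutator_sup_top_le _ _ _ (ucs_comm_top _)
        _ = (⊤ : Subgroup H).lowerCentralSeries (k + 2) ⊔ Subgroup.upperCentralSeries H (n - (k+1)) := by
            rw [show n - k - 1 = n - (k+1) by omega]; rfl
  -- Step 3: H = L_n ⊔ Z_n
  have hC : ∀ k : ℕ, (⊤ : Subgroup H) ≤ (⊤ : Subgroup H).lowerCentralSeries k ⊔ Subgroup.upperCentralSeries H n := by
    intro k
    induction k with
    | zero => simp [Subgroup.lowerCentralSeries_zero]
    | succ k ih =>
      refine ih.trans (sup_le ?_ le_sup_right)
      refine (hB k).trans (sup_le le_sup_left ?_)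
      exact le_sup_of_le_right (Subgroup.upperCentralSeries_mono H (Nat.sub_le n k))
  set L := (⊤ : Subgroup H).lowerCentralSeries n with hL
  -- Step 4: [L, Z_n] = ⊥
  have hcent : ⁅L, Subgroup.upperCentralSeries H n⁆ = ⊥ := by
    have := lcs_ucs (H := H) n n
    rwa [Nat.sub_self, Subgroup.upperCentralSeries_zero, le_bot_iff] at this
  -- Step 5: L ≤ [L, L]
  have hLL : L ≤ ⁅L, L⁆ := by
    have h1 : L ≤ (⊤ : Subgroup H).lowerCentralSeries (n + 1) := by
      have := hB n
      rwa [Nat.sub_self, Subgroup.upperCentralSeries_zero, sup_bot_eq] at this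
    have h2 : (⊤ : Subgroup H).lowerCentralSeries (n + 1) = ⁅L, (⊤ : Subgroup H)⁆ := rfl
    refine h1.trans ?_
    rw [h2, Subgroup.commutator_le]
    intro g hg h _
    have hh : h ∈ (L : Set H) * (Subgroup.upperCentralSeries H n : Set H) := by
      rw [← Subgroup.mul_normal]
      exact hC n (Subgroup.mem_top h)
    obtain ⟨l, hl, z, hz, rfl⟩ := hh
    have hz1 : ⁅g, z⁆ = 1 := by
      have := Subgroup.commutator_mem_commutator hg hz
      rwa [hcent, Subgroup.mem_bot] at this
    have key : ⁅g, l * z⁆ = ⁅g, l⁆ * (l * ⁅g, z⁆ * l⁻¹) := by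
      simp only [commutatorElement_def]; group
    rw [key, hz1]
    simpa using Subgroup.commutator_mem_commutator hg hl
  have hLeq : ⁅L, L⁆ = L := by
    refine le_antisymm ?_ hLL
    rw [Subgroup.commutator_le]
    intro g hg h hh
    exact mul_mem (mul_mem (mul_mem hg hh) (inv_mem hg)) (inv_mem hh)
  -- Step 6: conclude
  apply Subgroup.map_injective (Subgroup.subtype_injective L)
  rw [_root_.commutator_def, map_commutator, ← MonoidHom.range_eq_map, Subgroup.range_subtype]
  exact hLeq
end

section
/- Let G be a finitely generated group and n ≥ 0 a fixed integer. Then the following are equivalent: (i) γ_{n+1}(G) is a finitely generated group; (ii) for every group H and every surjective group homomorphism p : H → G whose kernel N satisfies N ≤ Z_n(H), the subgroup γ_{n+1}(H) is finitely generated. -/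
universe u

open Subgroup Pointwise
open scoped commutatorElement

variable {G H : Type*} [Group G] [Group H]

section Identities
variable (a b c : H)

lemma cIdL : ⁅a*b, c⁆ = a * ⁅b,c⁆ * a⁻¹ * ⁅a,c⁆ := by group
lemma cIdR : ⁅a, b*c⁆ = ⁅a,b⁆ * (b * ⁅a,c⁆ * b⁻¹) := by group
lemma cIdInvL : ⁅a⁻¹, b⁆ = a⁻¹ * ⁅a,b⁆⁻¹ * a := by group
lemma cIdInvR : ⁅a, b⁻¹⁆ = b⁻¹ * ⁅a,b⁆⁻¹ * b := by group
lemma conj_eq_comm_mul (g x : H) : g * x * g⁻¹ = ⁅g, x⁆ * x := by group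

end Identities

lemma comm_mem_of_closure {P : Subgroup H} (hP : P.Normal) {SA SB : Set H}
    (h : ∀ a ∈ SA, ∀ b ∈ SB, ⁅a, b⁆ ∈ P) :
    ∀ a ∈ closure SA, ∀ b ∈ closure SB, ⁅a, b⁆ ∈ P := by
  intro a ha
  induction ha using closure_induction with
  | mem x hx =>
    intro b hb
    induction hb using closure_induction with
    | mem y hy => exact h x hx y hy
    | one => simpa using P.one_mem
    | mul y z _ _ ihy ihz =>
      rw [cIdR]
      exact P.mul_mem ihy (hP.conj_mem _ ihz _)
    | inv y _ ihy =>
      rw [cIdInvR]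
      simpa using hP.conj_mem _ (P.inv_mem ihy) y⁻¹
  | one => intro b hb; simpa using P.one_mem
  | mul x y _ _ ihx ihy =>
    intro b hb
    rw [cIdL]
    exact P.mul_mem (hP.conj_mem _ (ihy b hb) _) (ihx b hb)
  | inv x _ ihx =>
    intro b hb
    rw [cIdInvL]
    simpa using hP.conj_mem _ (P.inv_mem (ihx b hb)) x⁻¹

lemma mem_ucs_comm {j : ℕ} {x : H} (hx : x ∈ Subgroup.upperCentralSeries H (j+1)) (y : H) :
    ⁅x, y⁆ ∈ Subgroup.upperCentralSeries H j := by
  rw [commutatorElement_def]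
  exact (Subgroup.mem_upperCentralSeries_succ_iff).mp hx y

lemma comm_ucs_top (j : ℕ) : ⁅Subgroup.upperCentralSeries H j, (⊤ : Subgroup H)⁆ ≤ Subgroup.upperCentralSeries H (j-1) := by
  cases j with
  | zero =>
    rw [Subgroup.upperCentralSeries_zero]
    simp
  | succ j =>
    rw [Nat.add_sub_cancel]
    exact commutator_le.mpr fun x hx y _ => mem_ucs_comm hx y

lemma comm_top_ucs (j : ℕ) : ⁅(⊤ : Subgroup H), Subgroup.upperCentralSeries H j⁆ ≤ Subgroup.upperCentralSeries H (j-1) :=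
  by rw [commutator_comm]; exact comm_ucs_top j

lemma three_subgroups {A B C K : Subgroup H} [K.Normal]
    (h1 : ⁅⁅B, C⁆, A⁆ ≤ K) (h2 : ⁅⁅C, A⁆, B⁆ ≤ K) : ⁅⁅A, B⁆, C⁆ ≤ K := by
  let π := QuotientGroup.mk' K
  have hker : π.ker = K := QuotientGroup.ker_mk' K
  rw [← hker, ← Subgroup.map_eq_bot_iff]
  rw [Subgroup.map_commutator, Subgroup.map_commutator]
  apply Subgroup.commutator_commutator_eq_bot_of_rotate
  · rw [← Subgroup.map_commutator, ← Subgroup.map_commutator, Subgroup.map_eq_bot_iff, hker]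
    exact h1
  · rw [← Subgroup.map_commutator, ← Subgroup.map_commutator, Subgroup.map_eq_bot_iff, hker]
    exact h2

lemma comm_lcs_ucs (i j : ℕ) :
    ⁅Subgroup.lowerCentralSeries (⊤ : Subgroup H) i, Subgroup.upperCentralSeries H j⁆ ≤ Subgroup.upperCentralSeries H (j - (i+1)) := by
  induction i generalizing j with
  | zero =>
    rw [Subgroup.lowerCentralSeries_zero]
    exact comm_top_ucs j
  | succ i ih =>
    rw [Subgroup.lowerCentralSeries_succ]
    have e1 : j - 1 - (i+1) = j - (i+1+1) := by omega
    have e2 : j - (i+1) - 1 = j - (i+1+1) := by omega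
    apply three_subgroups
    · calc ⁅⁅(⊤ : Subgroup H), Subgroup.upperCentralSeries H j⁆, Subgroup.lowerCentralSeries (⊤ : Subgroup H) i⁆
          ≤ ⁅Subgroup.upperCentralSeries H (j-1), Subgroup.lowerCentralSeries (⊤ : Subgroup H) i⁆ :=
            commutator_mono (comm_top_ucs j) le_rfl
        _ = ⁅Subgroup.lowerCentralSeries (⊤ : Subgroup H) i, Subgroup.upperCentralSeries H (j-1)⁆ := commutator_comm _ _
        _ ≤ Subgroup.upperCentralSeries H (j - 1 - (i+1)) := ih (j-1)
        _ = Subgroup.upperCentralSeries H (j - (i+1+1)) := by rw [e1]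
    · calc ⁅⁅Subgroup.upperCentralSeries H j, Subgroup.lowerCentralSeries (⊤ : Subgroup H) i⁆, (⊤ : Subgroup H)⁆
          = ⁅⁅Subgroup.lowerCentralSeries (⊤ : Subgroup H) i, Subgroup.upperCentralSeries H j⁆, (⊤ : Subgroup H)⁆ := by
            rw [commutator_comm (Subgroup.upperCentralSeries H j)]
        _ ≤ ⁅Subgroup.upperCentralSeries H (j - (i+1)), (⊤ : Subgroup H)⁆ := commutator_mono (ih j) le_rfl
        _ ≤ Subgroup.upperCentralSeries H (j - (i+1) - 1) := comm_ucs_top _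
        _ = Subgroup.upperCentralSeries H (j - (i+1+1)) := by rw [e2]

lemma lcs_map_eq (f : G →* H) (hf : Function.Surjective f) (i : ℕ) :
    Subgroup.map f (Subgroup.lowerCentralSeries (⊤ : Subgroup G) i) = Subgroup.lowerCentralSeries (⊤ : Subgroup H) i := by
  induction i with
  | zero =>
    rw [Subgroup.lowerCentralSeries_zero, Subgroup.lowerCentralSeries_zero, ← MonoidHom.range_eq_map,
      MonoidHom.range_eq_top]
    exact hf
  | succ i ih =>
    show Subgroup.map f ⁅Subgroup.lowerCentralSeries (⊤ : Subgroup G) i, ⊤⁆ = ⁅Subgroup.lowerCentralSeries (⊤ : Subgroup H) i, ⊤⁆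
    rw [Subgroup.map_commutator, ih, ← MonoidHom.range_eq_map, MonoidHom.range_eq_top.mpr hf]

lemma exists_mul_of_mem_sup {A B : Subgroup H} [B.Normal] {x : H} (hx : x ∈ A ⊔ B) :
    ∃ a ∈ A, ∃ b ∈ B, x = a * b := by
  have h : x ∈ (A : Set H) * (B : Set H) := by
    rw [← Subgroup.mul_normal A B]
    exact hx
  obtain ⟨a, ha, b, hb, hab⟩ := Set.mem_mul.mp h
  exact ⟨a, ha, b, hb, hab.symm⟩

lemma ucs_comap_subtype (K : Subgroup H) (j : ℕ) :
    (Subgroup.upperCentralSeries H j).comap K.subtype ≤ Subgroup.upperCentralSeries K j := by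
  induction j with
  | zero =>
    intro x hx
    simp only [Subgroup.upperCentralSeries_zero, mem_comap, mem_bot] at hx ⊢
    exact Subtype.ext (by simpa using hx)
  | succ j ih =>
    intro x hx
    rw [Subgroup.mem_upperCentralSeries_succ_iff]
    intro y
    apply ih
    simp only [mem_comap] at hx ⊢
    have := (Subgroup.mem_upperCentralSeries_succ_iff).mp hx (y : H)
    simpa using this

lemma fg_map_subgroup {K : Subgroup G} (h : K.FG) (f : G →* H) : (K.map f).FG := by
  obtain ⟨S, hS, hfin⟩ := (Subgroup.fg_iff K).mp h
  exact (Subgroup.fg_iff _).mpr ⟨f '' S, by rw [← MonoidHom.map_closure, hS], hfin.image f⟩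

lemma fg_lcs_of_surjective (f : G →* H) (hf : Function.Surjective f) (n : ℕ)
    (h : Group.FG (Subgroup.lowerCentralSeries (⊤ : Subgroup G) n)) : Group.FG (Subgroup.lowerCentralSeries (⊤ : Subgroup H) n) := by
  rw [Group.fg_iff_subgroup_fg] at h ⊢
  rw [← lcs_map_eq f hf n]
  exact fg_map_subgroup h f

lemma mem_ucs_comm' {j : ℕ} {z : H} (hz : z ∈ Subgroup.upperCentralSeries H j) (c : H) :
    ⁅z, c⁆ ∈ Subgroup.upperCentralSeries H (j-1) :=
  comm_ucs_top j (commutator_mem_commutator hz (mem_top c))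

lemma mem_comm_lcs_ucs {i j : ℕ} {u w : H} (hu : u ∈ Subgroup.lowerCentralSeries (⊤ : Subgroup H) i)
    (hw : w ∈ Subgroup.upperCentralSeries H j) : ⁅u, w⁆ ∈ Subgroup.upperCentralSeries H (j - (i+1)) :=
  comm_lcs_ucs i j (commutator_mem_commutator hu hw)

lemma lcs_le_map_of_sup_ucs (K : Subgroup H) (n : ℕ)
    (htop : (⊤ : Subgroup H) ≤ K ⊔ Subgroup.upperCentralSeries H n) :
    Subgroup.lowerCentralSeries (⊤ : Subgroup H) n ≤ Subgroup.map K.subtype (Subgroup.lowerCentralSeries (⊤ : Subgroup K) n) := by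
  have key : ∀ i, Subgroup.lowerCentralSeries (⊤ : Subgroup H) i ≤
      (Subgroup.map K.subtype (Subgroup.lowerCentralSeries (⊤ : Subgroup K) i)) ⊔ Subgroup.upperCentralSeries H (n - i) := by
    intro i
    induction i with
    | zero =>
      rw [Subgroup.lowerCentralSeries_zero, Subgroup.lowerCentralSeries_zero, ← MonoidHom.range_eq_map,
        Subgroup.range_subtype, Nat.sub_zero]
      exact htop
    | succ i ih =>
      show ⁅Subgroup.lowerCentralSeries (⊤ : Subgroup H) i, (⊤ : Subgroup H)⁆ ≤ _
      apply commutator_le.mpr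
      intro a ha b _
      obtain ⟨u, hu, z, hz, rfl⟩ := exists_mul_of_mem_sup (ih ha)
      obtain ⟨k, hk, w, hw, rfl⟩ := exists_mul_of_mem_sup (htop (mem_top b))
      have huH : u ∈ Subgroup.lowerCentralSeries (⊤ : Subgroup H) i := Subgroup.lowerCentralSeries_map_subtype_le K i hu
      set R := (Subgroup.map K.subtype (Subgroup.lowerCentralSeries (⊤ : Subgroup K) (i+1))) ⊔
        Subgroup.upperCentralSeries H (n - (i+1)) with hR
      have hZ : Subgroup.upperCentralSeries H (n - (i+1)) ≤ R := le_sup_right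
      have hA : (Subgroup.map K.subtype (Subgroup.lowerCentralSeries (⊤ : Subgroup K) (i+1))) ≤ R := le_sup_left
      have e1 : n - i - 1 = n - (i+1) := by omega
      -- ⁅z, k*w⁆ ∈ ucs (n-(i+1))
      have hz1 : ⁅z, k*w⁆ ∈ Subgroup.upperCentralSeries H (n - (i+1)) := by
        rw [← e1]; exact mem_ucs_comm' hz _
      -- ⁅u, w⁆ ∈ ucs (n-(i+1))
      have hw1 : ⁅u, w⁆ ∈ Subgroup.upperCentralSeries H (n - (i+1)) := mem_comm_lcs_ucs huH hw
      -- ⁅u, k⁆ ∈ map subtype (lcs K (i+1))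
      obtain ⟨uK, huK, rfl⟩ := hu
      have hk1 : ⁅K.subtype uK, k⁆ ∈ Subgroup.map K.subtype (Subgroup.lowerCentralSeries (⊤ : Subgroup K) (i+1)) := by
        refine ⟨⁅uK, (⟨k, hk⟩ : K)⁆, ?_, ?_⟩
        · exact commutator_mem_commutator huK (mem_top _)
        · simp [map_commutatorElement]
      have h2 : ⁅K.subtype uK, k*w⁆ ∈ R := by
        rw [cIdR]
        exact R.mul_mem (hA hk1) (hZ ((show (Subgroup.upperCentralSeries H (n - (i+1))).Normal from inferInstance).conj_mem _ hw1 _))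
      have h1 : K.subtype uK * ⁅z, k*w⁆ * (K.subtype uK)⁻¹ ∈ R :=
        hZ ((show (Subgroup.upperCentralSeries H (n - (i+1))).Normal from inferInstance).conj_mem _ hz1 _)
      rw [cIdL]
      exact R.mul_mem h1 h2
  have := key n
  rwa [Nat.sub_self, Subgroup.upperCentralSeries_zero, sup_bot_eq] at this


lemma lcs_succ_def (j : ℕ) : Subgroup.lowerCentralSeries (⊤ : Subgroup G) (j+1) = ⁅Subgroup.lowerCentralSeries (⊤ : Subgroup G) j, ⊤⁆ := rfl

lemma comm_top_lcs_le (j : ℕ) :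
    ⁅(⊤ : Subgroup G), Subgroup.lowerCentralSeries (⊤ : Subgroup G) j⁆ ≤ Subgroup.lowerCentralSeries (⊤ : Subgroup G) (j+1) := by
  rw [commutator_comm, ← lcs_succ_def]

lemma lcs_step_set (hG : Group.FG G) :
    ∀ j : ℕ, ∃ S : Set G, S.Finite ∧ (S ⊆ Subgroup.lowerCentralSeries (⊤ : Subgroup G) j) ∧
      Subgroup.lowerCentralSeries (⊤ : Subgroup G) j ≤ Subgroup.closure S ⊔ Subgroup.lowerCentralSeries (⊤ : Subgroup G) (j+1) := by
  obtain ⟨X, hXc, hXf⟩ := Group.fg_iff.mp hG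
  intro j
  induction j with
  | zero =>
    exact ⟨X, hXf, fun x _ => mem_top x, by rw [Subgroup.lowerCentralSeries_zero, hXc]; exact le_sup_left⟩
  | succ j ih =>
    obtain ⟨S, hSf, hSsub, hSle⟩ := ih
    have hsub : (Set.image2 (fun a x => ⁅a, x⁆) S X) ⊆ ↑(Subgroup.lowerCentralSeries (⊤ : Subgroup G) (j+1)) := by
      rintro - ⟨a, ha, x, hx, rfl⟩
      exact (lcs_succ_def (G := G) j) ▸ commutator_mem_commutator (hSsub ha) (mem_top x)
    refine ⟨Set.image2 (fun a x => ⁅a, x⁆) S X, hSf.image2 _ hXf, hsub, ?_⟩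
    set P := Subgroup.closure (Set.image2 (fun a x => ⁅a, x⁆) S X) ⊔ Subgroup.lowerCentralSeries (⊤ : Subgroup G) (j+2)
      with hPdef
    have hPle : P ≤ Subgroup.lowerCentralSeries (⊤ : Subgroup G) (j+1) := by
      apply sup_le
      · rw [Subgroup.closure_le]
        exact hsub
      · exact Subgroup.lowerCentralSeries_antitone _ (by omega)
    have hPnormal : P.Normal := by
      constructor
      intro p hp g
      rw [conj_eq_comm_mul]
      refine P.mul_mem ?_ hp
      exact le_sup_right (α := Subgroup G) (a := Subgroup.closure _)
        (comm_top_lcs_le (j+1) (commutator_mem_commutator (mem_top g) (hPle hp)))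
    rw [lcs_succ_def]
    apply commutator_le.mpr
    intro a ha b hb
    haveI := Subgroup.lowerCentralSeries_normal (⊤ : Subgroup G) (j+1)
    obtain ⟨c, hc, v, hv, rfl⟩ := exists_mul_of_mem_sup (hSle ha)
    have h1 : ⁅v, b⁆ ∈ P := le_sup_right (α := Subgroup G) (a := Subgroup.closure _)
      ((lcs_succ_def (G := G) (j+1)) ▸ commutator_mem_commutator hv (mem_top b))
    have h2 : ⁅c, b⁆ ∈ P := by
      refine comm_mem_of_closure hPnormal ?_ c hc b (by rw [hXc]; exact mem_top b)
      intro s hs x hx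
      exact le_sup_left (α := Subgroup G) (b := Subgroup.lowerCentralSeries (⊤ : Subgroup G) (j+2))
        (Subgroup.subset_closure (Set.mem_image2_of_mem hs hx))
    rw [cIdL]
    exact P.mul_mem (hPnormal.conj_mem _ h1 c) h2

lemma fg_lcs_pred (hG : Group.FG G) {j : ℕ} (h : (Subgroup.lowerCentralSeries (⊤ : Subgroup G) (j+1)).FG) :
    (Subgroup.lowerCentralSeries (⊤ : Subgroup G) j).FG := by
  obtain ⟨S, hSf, hSsub, hSle⟩ := lcs_step_set hG j
  obtain ⟨T, hTc, hTf⟩ := (Subgroup.fg_iff _).mp h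
  refine (Subgroup.fg_iff _).mpr ⟨S ∪ T, le_antisymm ?_ ?_, hSf.union hTf⟩
  · rw [Subgroup.closure_union, hTc]
    apply sup_le
    · rw [Subgroup.closure_le]; exact hSsub
    · exact Subgroup.lowerCentralSeries_antitone _ (by omega)
  · refine le_trans hSle ?_
    rw [Subgroup.closure_union, hTc]

lemma fg_lcs_anti (hG : Group.FG G) {j m : ℕ} (hjm : j ≤ m)
    (h : (Subgroup.lowerCentralSeries (⊤ : Subgroup G) m).FG) : (Subgroup.lowerCentralSeries (⊤ : Subgroup G) j).FG := by
  induction m with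
  | zero =>
    have : j = 0 := by omega
    subst this; exact h
  | succ m ih =>
    rcases Nat.eq_or_lt_of_le hjm with rfl | hlt
    · exact h
    · exact ih (by omega) (fg_lcs_pred hG h)


lemma comm_mul_central_right {t u s : H} (hc : ∀ g, t * g = g * t) : ⁅u, s*t⁆ = ⁅u, s⁆ := by
  have h : u * (s * t) * u⁻¹ * (s * t)⁻¹ = u * s * (t * u⁻¹) * t⁻¹ * s⁻¹ := by group
  rw [commutatorElement_def, commutatorElement_def, h, hc u⁻¹]
  group

lemma comm_mul_central_left {t s w : H} (hc : ∀ g, t * g = g * t) : ⁅s*t, w⁆ = ⁅s, w⁆ := by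
  have h : s * t * w * (s * t)⁻¹ * w⁻¹ = s * (t * w) * t⁻¹ * s⁻¹ * w⁻¹ := by group
  rw [commutatorElement_def, commutatorElement_def, h, hc w]
  group

lemma central_step {p : H →* G} (hp : Function.Surjective p)
    (hker : p.ker ≤ Subgroup.center H) (hH : Group.FG H) (hG : Group.FG G) :
    ∀ j, (Subgroup.lowerCentralSeries (⊤ : Subgroup G) j).FG → (Subgroup.lowerCentralSeries (⊤ : Subgroup H) j).FG := by
  intro j
  induction j with
  | zero =>
    intro _
    rw [Subgroup.lowerCentralSeries_zero]
    exact Group.fg_def.mp hH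
  | succ j ih =>
    intro hfg
    classical
    -- D := lcs H j is finitely generated
    have hD : (Subgroup.lowerCentralSeries (⊤ : Subgroup H) j).FG := ih (fg_lcs_pred hG hfg)
    obtain ⟨Dset, hDc, hDf⟩ := (Subgroup.fg_iff _).mp hD
    obtain ⟨X, hXc, hXf⟩ := Group.fg_iff.mp hH
    obtain ⟨σset, hσc, hσf⟩ := (Subgroup.fg_iff _).mp hfg
    set L := Subgroup.lowerCentralSeries (⊤ : Subgroup H) (j+1) with hLdef
    haveI : L.Normal := Subgroup.lowerCentralSeries_normal (⊤ : Subgroup H) (j+1)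
    -- lifts of the generators of lcs G (j+1)
    have hlift : ∀ σ : G, ∃ s : H, σ ∈ σset → (s ∈ L ∧ p s = σ) := by
      intro σ
      by_cases hσ : σ ∈ σset
      · have hσ' : σ ∈ Subgroup.map p L := by
          rw [hLdef, lcs_map_eq p hp]
          exact hσc ▸ Subgroup.subset_closure hσ
        obtain ⟨s, hs, hps⟩ := hσ'
        exact ⟨s, fun _ => ⟨hs, hps⟩⟩
      · exact ⟨1, fun h => absurd h hσ⟩
    choose f hf using hlift
    set σT : Set H := f '' σset with hσT
    have hσTf : σT.Finite := hσf.image f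
    have hσTL : σT ⊆ ↑L := by rintro - ⟨σ, hσ, rfl⟩; exact (hf σ hσ).1
    set S := Subgroup.closure σT with hSdef
    have hSL : S ≤ L := (Subgroup.closure_le _).mpr hσTL
    have hmap : Subgroup.map p S = Subgroup.lowerCentralSeries (⊤ : Subgroup G) (j+1) := by
      rw [hSdef, MonoidHom.map_closure, ← hσc]
      congr 1
      rw [hσT, Set.image_image]
      exact (Set.image_congr fun σ hσ => (hf σ hσ).2).trans (Set.image_id' σset)
    -- decomposition of elements of L
    have hdec : ∀ l ∈ L, ∃ s ∈ S, ∃ t ∈ p.ker, l = s * t := by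
      intro l hl
      have hpl : p l ∈ Subgroup.map p S := by
        rw [hmap]
        exact (lcs_map_eq p hp (j+1)) ▸ Subgroup.mem_map_of_mem p hl
      obtain ⟨s, hs, hps⟩ := hpl
      refine ⟨s, hs, s⁻¹ * l, ?_, by group⟩
      rw [MonoidHom.mem_ker, map_mul, map_inv, hps, inv_mul_cancel]
    have hcent : ∀ t ∈ p.ker, ∀ g : H, t * g = g * t := by
      intro t ht g
      exact ((Subgroup.mem_center_iff.mp (hker ht)) g).symm
    -- the finite generating set W
    set W : Set H := (Set.image2 (fun d x => ⁅d, x⁆) Dset X) ∪ σT ∪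
      ((Set.image2 (fun x s => ⁅x, s⁆) X σT) ∪ (Set.image2 (fun x s => ⁅x⁻¹, s⁆) X σT))
      with hWdef
    have hWf : W.Finite :=
      (((hDf.image2 _ hXf).union hσTf).union ((hXf.image2 _ hσTf).union (hXf.image2 _ hσTf)))
    have hLcomm : ∀ a ∈ Subgroup.lowerCentralSeries (⊤ : Subgroup H) j, ∀ b : H, ⁅a, b⁆ ∈ L := by
      intro a ha b
      rw [hLdef, lcs_succ_def]
      exact commutator_mem_commutator ha (mem_top b)
    have hconjL : ∀ s ∈ L, ∀ x : H, ⁅x, s⁆ ∈ L := by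
      intro s hs x
      rw [commutatorElement_def]
      exact L.mul_mem (‹L.Normal›.conj_mem _ hs x) (L.inv_mem hs)
    have hWL : W ⊆ ↑L := by
      rintro w ((hw | hw) | (hw | hw))
      · obtain ⟨d, hd, x, hx, rfl⟩ := hw
        exact hLcomm d (hDc ▸ Subgroup.subset_closure hd) x
      · exact hσTL hw
      · obtain ⟨x, hx, s, hs, rfl⟩ := hw
        exact hconjL s (hσTL hs) x
      · obtain ⟨x, hx, s, hs, rfl⟩ := hw
        exact hconjL s (hσTL hs) x⁻¹
    set P := Subgroup.closure W ⊔ ⁅L, L⁆ with hPdef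
    have hLL_L : ⁅L, L⁆ ≤ L := Subgroup.commutator_le_left L L
    have hPL : P ≤ L := sup_le ((Subgroup.closure_le _).mpr hWL) hLL_L
    have hLLP : ∀ a b : H, a ∈ L → b ∈ L → ⁅a, b⁆ ∈ P := fun a b ha hb =>
      le_sup_right (α := Subgroup H) (a := Subgroup.closure W)
        (commutator_mem_commutator ha hb)
    have hWP : W ⊆ ↑P := fun w hw =>
      le_sup_left (α := Subgroup H) (b := ⁅L, L⁆) (Subgroup.subset_closure hw)
    -- L normalizes P
    have hLnormP : ∀ l ∈ L, ∀ q ∈ P, l * q * l⁻¹ ∈ P := by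
      intro l hl q hq
      rw [conj_eq_comm_mul]
      exact P.mul_mem (hLLP l q hl (hPL hq)) hq
    -- Step A1
    have sA1 : ∀ x ∈ X, ∀ s ∈ S, ⁅x, s⁆ ∈ P ∧ ⁅x⁻¹, s⁆ ∈ P := by
      intro x hx s hs
      induction hs using Subgroup.closure_induction with
      | mem y hy =>
        constructor
        · exact hWP (Or.inr (Or.inl (Set.mem_image2_of_mem hx hy)))
        · exact hWP (Or.inr (Or.inr (Set.mem_image2_of_mem hx hy)))
      | one => constructor <;> simpa using P.one_mem
      | mul s₁ s₂ hs₁ hs₂ ih₁ ih₂ =>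
        have hs₁L : s₁ ∈ L := hSL hs₁
        constructor
        · rw [cIdR]
          exact P.mul_mem ih₁.1 (hLnormP s₁ hs₁L _ ih₂.1)
        · rw [cIdR]
          exact P.mul_mem ih₁.2 (hLnormP s₁ hs₁L _ ih₂.2)
      | inv s₁ hs₁ ih =>
        have hs₁L : s₁⁻¹ ∈ L := L.inv_mem (hSL hs₁)
        constructor
        · rw [cIdInvR]
          simpa using hLnormP s₁⁻¹ hs₁L _ (P.inv_mem ih.1)
        · rw [cIdInvR]
          simpa using hLnormP s₁⁻¹ hs₁L _ (P.inv_mem ih.2)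
    -- Step A2 : commutators of anything with L lie in P
    have sA2 : ∀ u : H, ∀ l ∈ L, ⁅u, l⁆ ∈ P ∧ ⁅u⁻¹, l⁆ ∈ P := by
      intro u
      have hu : u ∈ Subgroup.closure X := by rw [hXc]; exact mem_top u
      induction hu using Subgroup.closure_induction with
      | mem x hx =>
        intro l hl
        obtain ⟨s, hs, t, ht, rfl⟩ := hdec l hl
        rw [comm_mul_central_right (hcent t ht), comm_mul_central_right (hcent t ht)]
        exact sA1 x hx s hs
      | one => intro l hl; constructor <;> simpa using P.one_mem
      | mul u₁ u₂ hu₁ hu₂ ih₁ ih₂ =>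
        intro l hl
        constructor
        · rw [cIdL]
          refine P.mul_mem ?_ ((ih₁ l hl).1)
          rw [conj_eq_comm_mul]
          exact P.mul_mem ((ih₁ _ (hPL ((ih₂ l hl).1))).1) ((ih₂ l hl).1)
        · rw [mul_inv_rev, cIdL]
          refine P.mul_mem ?_ ((ih₂ l hl).2)
          rw [conj_eq_comm_mul]
          exact P.mul_mem ((ih₂ _ (hPL ((ih₁ l hl).2))).2) ((ih₁ l hl).2)
      | inv u₁ hu₁ ih =>
        intro l hl
        refine ⟨(ih l hl).2, ?_⟩
        rw [inv_inv]
        exact (ih l hl).1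
    -- P is normal
    have hPnormal : P.Normal := by
      constructor
      intro q hq g
      rw [conj_eq_comm_mul]
      exact P.mul_mem ((sA2 g q (hPL hq)).1) hq
    -- Step B : L ≤ P
    have stepB : L ≤ P := by
      rw [hLdef, lcs_succ_def]
      apply commutator_le.mpr
      intro d hd b hb
      refine comm_mem_of_closure hPnormal ?_ d (hDc ▸ hd) b (by rw [hXc]; exact mem_top b)
      intro d' hd' x hx
      exact hWP (Or.inl (Or.inl (Set.mem_image2_of_mem hd' hx)))
    -- Step C : ⁅L, L⁆ ≤ S
    have stepC : ⁅L, L⁆ ≤ S := by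
      apply commutator_le.mpr
      intro l₁ h₁ l₂ h₂
      obtain ⟨s, hs, t, ht, rfl⟩ := hdec l₁ h₁
      obtain ⟨s', hs', t', ht', rfl⟩ := hdec l₂ h₂
      rw [comm_mul_central_right (hcent t' ht'), comm_mul_central_left (hcent t ht)]
      rw [commutatorElement_def]
      exact S.mul_mem (S.mul_mem (S.mul_mem hs hs') (S.inv_mem hs)) (S.inv_mem hs')
    -- conclude : L = closure W
    have hSW : S ≤ Subgroup.closure W := Subgroup.closure_mono (fun s hs => Or.inl (Or.inr hs))
    have : L = Subgroup.closure W := by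
      apply le_antisymm
      · exact le_trans stepB (sup_le le_rfl (le_trans stepC hSW))
      · exact (Subgroup.closure_le _).mpr hWL
    rw [hLdef] at this
    exact (Subgroup.fg_iff _).mpr ⟨W, this.symm, hWf⟩



lemma claim_dev (m : ℕ) : ∀ (n : ℕ), ∀ (H : Type u) (G' : Type u) (_ : Group H) (_ : Group G')
    (p : H →* G'), Function.Surjective p → p.ker ≤ Subgroup.upperCentralSeries H n →
    Group.FG H → Group.FG G' → (Subgroup.lowerCentralSeries (⊤ : Subgroup G') m).FG → (Subgroup.lowerCentralSeries (⊤ : Subgroup H) m).FG := by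
  intro n
  induction n with
  | zero =>
    intro H G' _ _ p hsurj hker hH hG' hfg
    have hinj : Function.Injective p :=
      (MonoidHom.ker_eq_bot_iff p).mp (le_bot_iff.mp hker)
    let e : H ≃* G' := MulEquiv.ofBijective p ⟨hinj, hsurj⟩
    have hes : Function.Surjective (e.symm : G' →* H) := e.symm.surjective
    have : Subgroup.map (e.symm : G' →* H) (Subgroup.lowerCentralSeries (⊤ : Subgroup G') m) = Subgroup.lowerCentralSeries (⊤ : Subgroup H) m :=
      lcs_map_eq _ hes m
    rw [← this]
    exact fg_map_subgroup hfg _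
  | succ n ih =>
    intro H G' _ _ p hsurj hker hH hG' hfg
    set N := p.ker with hN
    set M := ⁅N, (⊤ : Subgroup H)⁆ with hM
    haveI : M.Normal := Subgroup.commutator_normal N ⊤
    have hMN : M ≤ N := Subgroup.commutator_le_left N ⊤
    have hMucs : M ≤ Subgroup.upperCentralSeries H n := by
      calc M ≤ ⁅Subgroup.upperCentralSeries H (n+1), (⊤ : Subgroup H)⁆ := commutator_mono hker le_rfl
        _ ≤ Subgroup.upperCentralSeries H ((n+1) - 1) := comm_ucs_top (n+1)
        _ = Subgroup.upperCentralSeries H n := by rw [Nat.add_sub_cancel]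
    have hMker : M ≤ p.ker := hMN
    set pbar := QuotientGroup.lift M p hMker with hpbar
    have hpbar_surj : Function.Surjective pbar := by
      intro g
      obtain ⟨h, rfl⟩ := hsurj g
      exact ⟨QuotientGroup.mk h, rfl⟩
    have hpbar_ker : pbar.ker ≤ Subgroup.center (H ⧸ M) := by
      intro q hq
      obtain ⟨h, rfl⟩ := QuotientGroup.mk'_surjective M q
      have hhN : h ∈ N := by
        have h2 : p h = 1 := hq
        exact h2
      rw [Subgroup.mem_center_iff]
      intro g1
      obtain ⟨g, rfl⟩ := QuotientGroup.mk'_surjective M g1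
      have hcomm : ⁅h, g⁆ ∈ M := commutator_mem_commutator hhN (mem_top g)
      have h1 : ⁅((QuotientGroup.mk' M) h), ((QuotientGroup.mk' M) g)⁆ = 1 := by
        rw [← map_commutatorElement]
        exact (QuotientGroup.eq_one_iff _).mpr hcomm
      have := commutatorElement_eq_one_iff_mul_comm.mp h1
      simpa using this.symm
    haveI : Group.FG H := hH
    have hHbar : Group.FG (H ⧸ M) := Group.fg_of_surjective (QuotientGroup.mk'_surjective M)
    have hfgbar : (Subgroup.lowerCentralSeries (⊤ : Subgroup (H ⧸ M)) m).FG :=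
      central_step hpbar_surj hpbar_ker hHbar hG' m hfg
    refine ih H (H ⧸ M) _ _ (QuotientGroup.mk' M) (QuotientGroup.mk'_surjective M) ?_ hH hHbar hfgbar
    rw [QuotientGroup.ker_mk']
    exact hMucs



/-- For a finitely generated group `G` and `n ≥ 0`, the following are equivalent:
(i) `γ_{n+1}(G) = lowerCentralSeries G n` is finitely generated;
(ii) for every surjective homomorphism `p : H → G` with kernel contained in the `n`-th
term of the upper central series of `H`, `γ_{n+1}(H)` is finitely generated. -/
theorem fg_lowerCentralSeries_iff_fg_of_extensions
    (G : Type u) [Group G] (hG : Group.FG G) (n : ℕ) :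
    Group.FG (Subgroup.lowerCentralSeries (⊤ : Subgroup G) n) ↔
      ∀ (H : Type u) (_ : Group H) (p : H →* G), Function.Surjective p →
        p.ker ≤ Subgroup.upperCentralSeries H n → Group.FG (Subgroup.lowerCentralSeries (⊤ : Subgroup H) n) := by
  constructor
  · intro hfg H _ p hsurj hker
    classical
    rw [Group.fg_iff_subgroup_fg] at hfg
    -- pick generators of G and lifts in H
    obtain ⟨X, hXc, hXf⟩ := Group.fg_iff.mp hG
    have hlift : ∀ g : G, ∃ h : H, p h = g := hsurj
    choose f hf using hlift
    set K := Subgroup.closure (f '' X) with hK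
    have hKfg : K.FG := (Subgroup.fg_iff _).mpr ⟨f '' X, rfl, hXf.image f⟩
    have hmapK : Subgroup.map p K = ⊤ := by
      rw [hK, MonoidHom.map_closure, ← hXc]
      congr 1
      rw [Set.image_image]
      exact (Set.image_congr fun g _ => hf g).trans (Set.image_id' X)
    -- the restriction of p to K
    set pK : K →* G := p.comp K.subtype with hpK
    have hpKsurj : Function.Surjective pK := by
      intro g
      have : g ∈ Subgroup.map p K := hmapK ▸ mem_top g
      obtain ⟨k, hk, hpk⟩ := this
      exact ⟨⟨k, hk⟩, hpk⟩
    have hpKker : pK.ker ≤ Subgroup.upperCentralSeries K n := by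
      intro x hx
      apply ucs_comap_subtype
      rw [Subgroup.mem_comap]
      exact hker hx
    have hKfg' : Group.FG K := (Group.fg_iff_subgroup_fg K).mpr hKfg
    have hlcsK : (Subgroup.lowerCentralSeries (⊤ : Subgroup K) n).FG :=
      claim_dev n n K G _ _ pK hpKsurj hpKker hKfg' hG hfg
    -- transfer back to H
    have htop : (⊤ : Subgroup H) ≤ K ⊔ Subgroup.upperCentralSeries H n := by
      intro h _
      have : p h ∈ Subgroup.map p K := hmapK ▸ mem_top (p h)
      obtain ⟨k, hk, hpk⟩ := this
      have hmem : k⁻¹ * h ∈ Subgroup.upperCentralSeries H n := by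
        apply hker
        rw [MonoidHom.mem_ker, map_mul, map_inv, hpk, inv_mul_cancel]
      have : h = k * (k⁻¹ * h) := by group
      rw [this]
      exact Subgroup.mul_mem_sup hk hmem
    have heq : Subgroup.lowerCentralSeries (⊤ : Subgroup H) n = Subgroup.map K.subtype (Subgroup.lowerCentralSeries (⊤ : Subgroup K) n) :=
      le_antisymm (lcs_le_map_of_sup_ucs K n htop) (Subgroup.lowerCentralSeries_map_subtype_le K n)
    rw [Group.fg_iff_subgroup_fg, heq]
    exact fg_map_subgroup hlcsK _
  · intro h
    refine h G ‹Group G› (MonoidHom.id G) Function.surjective_id ?_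
    intro x hx
    simp only [MonoidHom.mem_ker, MonoidHom.id_apply] at hx
    subst hx
    exact (Subgroup.upperCentralSeries G n).one_mem
end

section
/- Let 1 → N → H → G → 1 be an extension of groups (i.e., a surjective group homomorphism H → G with kernel N) such that every element of N lies in 𝔇_n(H), for a fixed positive integer n. If G is finite, then Γ_{n+1}(H) is finite. -/
open Subgroup

open scoped commutatorElement

section Auxiliary

/-- The iterated commutator `[⋯[[h, x₁], x₂], ⋯, xₖ]` of an element with a list of
elements. -/
def iteratedCommutator {H : Type*} [Group H] : H → List H → H
  | h, [] => h
  | h, x :: xs => iteratedCommutator ⁅h, x⁆ xs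

/-- `𝔇ₙ(H)`: the set of `h ∈ H` such that `[⋯[[h, x₁], x₂], ⋯, xₙ] = 1` whenever
`xᵢ ∈ Γᵢ(H)` for `i = 1, …, n`, where `Γᵢ(H) = derivedSeries H (i - 1)` is the derived
series (`Γ₁(H) = H`). -/
def frakD (H : Type*) [Group H] (n : ℕ) : Set H :=
  {h | ∀ xs : List H, xs.length = n →
    (∀ i : Fin xs.length, xs.get i ∈ derivedSeries H i) → iteratedCommutator h xs = 1}

lemma iteratedCommutator_one {H : Type*} [Group H] (xs : List H) :
    iteratedCommutator (1 : H) xs = 1 := by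
  induction xs with
  | nil => rfl
  | cons x xs ih => simpa [iteratedCommutator] using ih

lemma iteratedCommutator_map {H K : Type*} [Group H] [Group K] (f : H →* K) (h : H)
    (xs : List H) : f (iteratedCommutator h xs) = iteratedCommutator (f h) (List.map f xs) := by
  induction xs generalizing h with
  | nil => rfl
  | cons x xs ih => simp [iteratedCommutator, ih, map_commutatorElement]

/-- Generalized `frakD` starting at level `s` of the derived series. -/
def frakDFrom (H : Type*) [Group H] (s n : ℕ) : Set H :=
  {h | ∀ xs : List H, xs.length = n →
    (∀ i : Fin xs.length, xs.get i ∈ derivedSeries H (s + i)) → iteratedCommutator h xs = 1}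

lemma frakD_eq (H : Type*) [Group H] (n : ℕ) : frakD H n = frakDFrom H 0 n := by
  simp [frakD, frakDFrom]

lemma mem_frakDFrom_zero {H : Type*} [Group H] {s : ℕ} {h : H} :
    h ∈ frakDFrom H s 0 ↔ h = 1 := by
  constructor
  · intro hh
    simpa [iteratedCommutator] using hh [] rfl (fun i => i.elim0)
  · rintro rfl
    intro xs hlen _
    exact iteratedCommutator_one xs

lemma mem_frakDFrom_succ_iff {H : Type*} [Group H] {s n : ℕ} {h : H} :
    h ∈ frakDFrom H s (n + 1) ↔
      ∀ x ∈ derivedSeries H s, ⁅h, x⁆ ∈ frakDFrom H (s + 1) n := by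
  constructor
  · intro hh x hx xs hlen hmem
    refine hh (x :: xs) (by simp [hlen]) ?_
    intro i
    refine Fin.cases ?_ ?_ i
    · simpa using hx
    · intro j
      have e : s + 1 + (j : ℕ) = s + ((j : ℕ) + 1) := by omega
      simpa [e] using hmem j
  · intro hh xs hlen hmem
    match xs, hlen with
    | x :: xs, hlen =>
      have hx : x ∈ derivedSeries H s := by
        simpa using hmem ⟨0, by simp⟩
      have hxs : ∀ i : Fin xs.length, xs.get i ∈ derivedSeries H (s + 1 + i) := by
        intro j
        have e : s + ((j : ℕ) + 1) = s + 1 + (j : ℕ) := by omega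
        simpa [e] using hmem j.succ
      simpa [iteratedCommutator] using hh x hx xs (by simpa using hlen) hxs

lemma frakDFrom_conj_mem {H : Type*} [Group H] {n : ℕ} :
    ∀ {s : ℕ} {h : H}, h ∈ frakDFrom H s n → ∀ g : H, g * h * g⁻¹ ∈ frakDFrom H s n := by
  induction n with
  | zero =>
    intro s h hh g
    rw [mem_frakDFrom_zero] at hh ⊢
    simp [hh]
  | succ n ih =>
    intro s h hh g
    rw [mem_frakDFrom_succ_iff] at hh ⊢
    intro x hx
    have hx' : g⁻¹ * x * g ∈ derivedSeries H s := by
      simpa using (derivedSeries_normal H s).conj_mem x hx g⁻¹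
    have key : ⁅g * h * g⁻¹, x⁆ = g * ⁅h, g⁻¹ * x * g⁆ * g⁻¹ := by
      simp only [commutatorElement_def]
      group
    rw [key]
    exact ih (hh _ hx') g

lemma frakDFrom_inv_mem {H : Type*} [Group H] {n : ℕ} :
    ∀ {s : ℕ} {h : H}, h ∈ frakDFrom H s n → h⁻¹ ∈ frakDFrom H s n := by
  induction n with
  | zero =>
    intro s h hh
    rw [mem_frakDFrom_zero] at hh ⊢
    simp [hh]
  | succ n ih =>
    intro s h hh
    rw [mem_frakDFrom_succ_iff] at hh ⊢
    intro x hx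
    have key : ⁅h⁻¹, x⁆ = h⁻¹ * ⁅h, x⁆⁻¹ * (h⁻¹)⁻¹ := by
      simp only [commutatorElement_def]
      group
    rw [key]
    exact frakDFrom_conj_mem (ih (hh x hx)) h⁻¹

lemma frakDFrom_mul_mem {H : Type*} [Group H] {n : ℕ} :
    ∀ {s : ℕ} {h₁ h₂ : H}, h₁ ∈ frakDFrom H s n → h₂ ∈ frakDFrom H s n →
      h₁ * h₂ ∈ frakDFrom H s n := by
  induction n with
  | zero =>
    intro s h₁ h₂ hh₁ hh₂
    rw [mem_frakDFrom_zero] at hh₁ hh₂ ⊢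
    simp [hh₁, hh₂]
  | succ n ih =>
    intro s h₁ h₂ hh₁ hh₂
    rw [mem_frakDFrom_succ_iff] at hh₁ hh₂ ⊢
    intro x hx
    have key : ⁅h₁ * h₂, x⁆ = (h₁ * ⁅h₂, x⁆ * h₁⁻¹) * ⁅h₁, x⁆ := by
      simp only [commutatorElement_def]
      group
    rw [key]
    exact ih (frakDFrom_conj_mem (hh₂ x hx) h₁) (hh₁ x hx)

/-- `frakDFrom H s n` as a subgroup. -/
def frakDSub (H : Type*) [Group H] (s n : ℕ) : Subgroup H where
  carrier := frakDFrom H s n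
  one_mem' := fun xs _ _ => iteratedCommutator_one xs
  mul_mem' := frakDFrom_mul_mem
  inv_mem' := frakDFrom_inv_mem

lemma map_subtype_derivedSeries (H : Type*) [Group H] (i : ℕ) :
    Subgroup.map (derivedSeries H 1).subtype (derivedSeries (derivedSeries H 1) i) =
      derivedSeries H (i + 1) := by
  induction i with
  | zero =>
    rw [derivedSeries_zero, ← MonoidHom.range_eq_map]
    exact Subgroup.range_subtype (derivedSeries H 1)
  | succ i ih =>
    rw [derivedSeries_succ (↥(derivedSeries H 1)) i, Subgroup.map_commutator, ih,
      ← derivedSeries_succ]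

lemma coe_mem_derivedSeries {H : Type*} [Group H] {i : ℕ}
    {x : derivedSeries H 1} (hx : x ∈ derivedSeries (derivedSeries H 1) i) :
    (x : H) ∈ derivedSeries H (i + 1) := by
  rw [← map_subtype_derivedSeries]
  exact ⟨x, hx, rfl⟩

lemma frakDFrom_transfer {H : Type*} [Group H] {s m : ℕ} {h : derivedSeries H 1}
    (hh : (h : H) ∈ frakDFrom H (s + 1) m) : h ∈ frakDFrom (derivedSeries H 1) s m := by
  intro xs hlen hmem
  have hinj : Function.Injective (derivedSeries H 1).subtype := Subtype.coe_injective
  apply hinj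
  rw [map_one, iteratedCommutator_map]
  refine hh (List.map (derivedSeries H 1).subtype xs) (by rw [List.length_map]; exact hlen) ?_
  intro i
  have hi : (i : ℕ) < xs.length := by simpa only [List.length_map] using i.2
  have := coe_mem_derivedSeries (hmem ⟨i, hi⟩)
  have e : s + (i : ℕ) + 1 = s + 1 + (i : ℕ) := by omega
  rw [e] at this
  convert this using 1
  exact List.getElem_map _

lemma commutator_center_left {Q : Type*} [Group Q] {z : Q} (hz : z ∈ Subgroup.center Q)
    (a b : Q) : ⁅a * z, b⁆ = ⁅a, b⁆ := by
  have hb : b * z = z * b := Subgroup.mem_center_iff.mp hz b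
  simp only [commutatorElement_def, mul_inv_rev]
  rw [mul_assoc a z b, ← hb]
  group

lemma commutator_center_right {Q : Type*} [Group Q] {w : Q} (hw : w ∈ Subgroup.center Q)
    (a b : Q) : ⁅a, b * w⁆ = ⁅a, b⁆ := by
  have ha : a⁻¹ * w = w * a⁻¹ := Subgroup.mem_center_iff.mp hw a⁻¹
  simp only [commutatorElement_def, mul_inv_rev]
  rw [← mul_assoc a b w, mul_assoc (a * b) w a⁻¹, ← ha]
  group

lemma finite_commutatorSet_of_finite_quot_center (Q : Type*) [Group Q]
    [Finite (Q ⧸ Subgroup.center Q)] : Finite (commutatorSet Q) := by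
  have hsub : commutatorSet Q ⊆
      Set.range (fun p : (Q ⧸ Subgroup.center Q) × (Q ⧸ Subgroup.center Q) =>
        ⁅p.1.out, p.2.out⁆) := by
    rintro - ⟨a, b, rfl⟩
    refine ⟨(QuotientGroup.mk a, QuotientGroup.mk b), ?_⟩
    obtain ⟨z, hz, hza⟩ : ∃ z ∈ Subgroup.center Q, (QuotientGroup.mk a :
        Q ⧸ Subgroup.center Q).out = a * z := by
      refine ⟨a⁻¹ * (QuotientGroup.mk a : Q ⧸ Subgroup.center Q).out, ?_, by group⟩
      rw [← QuotientGroup.eq]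
      exact (QuotientGroup.out_eq' _).symm
    obtain ⟨w, hw, hwb⟩ : ∃ w ∈ Subgroup.center Q, (QuotientGroup.mk b :
        Q ⧸ Subgroup.center Q).out = b * w := by
      refine ⟨b⁻¹ * (QuotientGroup.mk b : Q ⧸ Subgroup.center Q).out, ?_, by group⟩
      rw [← QuotientGroup.eq]
      exact (QuotientGroup.out_eq' _).symm
    simp only [hza, hwb, commutator_center_left hz, commutator_center_right hw]
  exact (Set.Finite.subset (Set.finite_range _) hsub).to_subtype

lemma finite_quotient_mono {H : Type*} [Group H] {A B : Subgroup H} [A.Normal] [B.Normal]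
    (hAB : A ≤ B) [Finite (H ⧸ A)] : Finite (H ⧸ B) := by
  refine Finite.of_surjective
    (QuotientGroup.map A B (MonoidHom.id H) (by simpa using hAB)) ?_
  intro x
  obtain ⟨y, rfl⟩ := QuotientGroup.mk_surjective x
  exact ⟨QuotientGroup.mk y, rfl⟩

universe u

lemma key_induction (n : ℕ) : ∀ (H : Type u) [Group H] (N : Subgroup H) [N.Normal],
    Finite (H ⧸ N) → (∀ h ∈ N, h ∈ frakDFrom H 0 (n + 1)) →
    Finite (derivedSeries H (n + 1)) := by
  induction n with
  | zero =>
    intro H _ N _ hfin hD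
    have hcen : N ≤ Subgroup.center H := by
      intro h hh
      rw [Subgroup.mem_center_iff]
      intro g
      have hg : ⁅h, g⁆ ∈ frakDFrom H 1 0 :=
        mem_frakDFrom_succ_iff.mp (hD h hh) g (by rw [derivedSeries_zero]; trivial)
      rw [mem_frakDFrom_zero, commutatorElement_eq_one_iff_mul_comm] at hg
      exact hg.symm
    haveI : Finite (H ⧸ Subgroup.center H) := finite_quotient_mono hcen
    haveI := finite_commutatorSet_of_finite_quot_center H
    rw [derivedSeries_one]
    infer_instance
  | succ n ih =>
    intro H _ N _ hfin hD
    haveI : (⁅N, (⊤ : Subgroup H)⁆).Normal := Subgroup.commutator_normal N ⊤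
    have hMN : ⁅N, (⊤ : Subgroup H)⁆ ≤ N := Subgroup.commutator_le_left N ⊤
    have hMD : ∀ h ∈ ⁅N, (⊤ : Subgroup H)⁆, h ∈ frakDFrom H 1 (n + 1) := by
      have hle : ⁅N, (⊤ : Subgroup H)⁆ ≤ frakDSub H 1 (n + 1) := by
        rw [Subgroup.commutator_le]
        intro g₁ hg₁ g₂ _
        exact mem_frakDFrom_succ_iff.mp (hD g₁ hg₁) g₂ (by rw [derivedSeries_zero]; trivial)
      exact fun h hh => hle hh
    haveI : (N.map (QuotientGroup.mk' ⁅N, (⊤ : Subgroup H)⁆)).Normal :=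
      Subgroup.Normal.map ‹N.Normal› _ (QuotientGroup.mk'_surjective _)
    have hNcen : N.map (QuotientGroup.mk' ⁅N, (⊤ : Subgroup H)⁆) ≤
        Subgroup.center (H ⧸ ⁅N, (⊤ : Subgroup H)⁆) := by
      rintro - ⟨h, hh, rfl⟩
      rw [Subgroup.mem_center_iff]
      intro q
      obtain ⟨g, rfl⟩ := QuotientGroup.mk_surjective q
      have h1 : ⁅(QuotientGroup.mk' ⁅N, (⊤ : Subgroup H)⁆) h,
          (QuotientGroup.mk' ⁅N, (⊤ : Subgroup H)⁆) g⁆ = 1 := by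
        rw [← map_commutatorElement, ← MonoidHom.mem_ker, QuotientGroup.ker_mk']
        exact Subgroup.commutator_mem_commutator hh (Subgroup.mem_top g)
      exact (commutatorElement_eq_one_iff_mul_comm.mp h1).symm
    haveI : Finite ((H ⧸ ⁅N, (⊤ : Subgroup H)⁆) ⧸
        N.map (QuotientGroup.mk' ⁅N, (⊤ : Subgroup H)⁆)) :=
      Finite.of_equiv (H ⧸ N)
        (QuotientGroup.quotientQuotientEquivQuotient ⁅N, (⊤ : Subgroup H)⁆ N hMN).symm.toEquiv
    haveI : Finite ((H ⧸ ⁅N, (⊤ : Subgroup H)⁆) ⧸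
        Subgroup.center (H ⧸ ⁅N, (⊤ : Subgroup H)⁆)) := finite_quotient_mono hNcen
    haveI := finite_commutatorSet_of_finite_quot_center (H ⧸ ⁅N, (⊤ : Subgroup H)⁆)
    have hmapK : Subgroup.map (QuotientGroup.mk' ⁅N, (⊤ : Subgroup H)⁆) (derivedSeries H 1) =
        _root_.commutator (H ⧸ ⁅N, (⊤ : Subgroup H)⁆) := by
      rw [commutator_def, derivedSeries_succ H 0, derivedSeries_zero, Subgroup.map_commutator,
        Subgroup.map_top_of_surjective _ (QuotientGroup.mk'_surjective _)]
    haveI : Finite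
        (Subgroup.map (QuotientGroup.mk' ⁅N, (⊤ : Subgroup H)⁆) (derivedSeries H 1)) := by
      rw [hmapK]; infer_instance
    set φ : (derivedSeries H 1) →* H ⧸ ⁅N, (⊤ : Subgroup H)⁆ :=
      (QuotientGroup.mk' ⁅N, (⊤ : Subgroup H)⁆).comp (derivedSeries H 1).subtype with hφ
    have hker : φ.ker = (⁅N, (⊤ : Subgroup H)⁆).subgroupOf (derivedSeries H 1) := by
      ext x
      simp only [hφ, MonoidHom.mem_ker, Subgroup.mem_subgroupOf, MonoidHom.comp_apply,
        Subgroup.coe_subtype, QuotientGroup.mk'_apply, QuotientGroup.eq_one_iff]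
    have hrange : φ.range =
        Subgroup.map (QuotientGroup.mk' ⁅N, (⊤ : Subgroup H)⁆) (derivedSeries H 1) := by
      ext x
      constructor
      · rintro ⟨y, rfl⟩; exact ⟨y, y.2, rfl⟩
      · rintro ⟨y, hy, rfl⟩; exact ⟨⟨y, hy⟩, rfl⟩
    haveI : Finite φ.range := by rw [hrange]; infer_instance
    haveI : Finite ((derivedSeries H 1) ⧸
        (⁅N, (⊤ : Subgroup H)⁆).subgroupOf (derivedSeries H 1)) := by
      rw [← hker]
      exact Finite.of_equiv _ (QuotientGroup.quotientKerEquivRange φ).toEquiv.symm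
    have hD' : ∀ h ∈ (⁅N, (⊤ : Subgroup H)⁆).subgroupOf (derivedSeries H 1),
        h ∈ frakDFrom (derivedSeries H 1) 0 (n + 1) := by
      intro h hh
      exact frakDFrom_transfer (hMD _ (Subgroup.mem_subgroupOf.mp hh))
    have hfinK := ih (derivedSeries H 1)
      ((⁅N, (⊤ : Subgroup H)⁆).subgroupOf (derivedSeries H 1)) ‹_› hD'
    have hmap := map_subtype_derivedSeries H (n + 1)
    haveI : Finite (Subgroup.map (derivedSeries H 1).subtype
        (derivedSeries (derivedSeries H 1) (n + 1))) :=
      Finite.of_equiv _ ((derivedSeries (derivedSeries H 1) (n + 1)).equivMapOfInjective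
        (derivedSeries H 1).subtype Subtype.coe_injective).toEquiv
    rw [show (n + 1 + 1) = (n + 1) + 1 from rfl, ← hmap]
    infer_instance

end Auxiliary

/-- If `p : H → G` is a surjective group homomorphism whose kernel is contained in
`𝔇ₙ(H)` (for a positive integer `n`), and `G` is finite, then
`Γ_{n+1}(H) = derivedSeries H n` is finite. -/
theorem finite_derivedSeries_of_ker_le_frakD
    {H G : Type*} [Group H] [Group G] (p : H →* G) (hp : Function.Surjective p)
    (n : ℕ) (hn : 0 < n) (hker : ∀ x ∈ p.ker, x ∈ frakD H n)
    (hG : Finite G) :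
    Finite (derivedSeries H n) := by
  obtain ⟨m, rfl⟩ := Nat.exists_eq_succ_of_ne_zero hn.ne'
  haveI : Finite (H ⧸ p.ker) :=
    Finite.of_equiv G (QuotientGroup.quotientKerEquivOfSurjective p hp).toEquiv.symm
  exact key_induction m H p.ker ‹_› (fun h hh => (frakD_eq H (m + 1)) ▸ hker h hh)
end

section
/- Let 1 → N → H → G → 1 be an extension of groups (i.e., a surjective group homomorphism H → G with kernel N) such that every element of N lies in 𝔇_n(H), for a fixed positive integer n. If G is a perfect group, then Γ_{n+1}(H) is a perfect group. -/
open scoped commutatorElement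

def auxP {H : Type*} [Group H] : ℕ → ℕ → H → Prop
  | _, 0 => fun h => h = 1
  | j, k + 1 => fun h => ∀ x ∈ derivedSeries H j, auxP (j + 1) k ⁅h, x⁆

theorem auxP_one {H : Type*} [Group H] : ∀ j k, auxP j k (1 : H)
  | _, 0 => rfl
  | j, k + 1 => fun x _ => by
      have h1 : ⁅(1 : H), x⁆ = 1 := by group
      rw [h1]; exact auxP_one (j + 1) k

theorem auxP_conj {H : Type*} [Group H] :
    ∀ (k j : ℕ) (h g : H), auxP j k h → auxP j k (g * h * g⁻¹)
  | 0, j, h, g, hh => by simp only [auxP] at hh ⊢; simp [hh]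
  | k + 1, j, h, g, hh => fun x hx => by
      have hx' : g⁻¹ * x * g ∈ derivedSeries H j :=
        by simpa using (derivedSeries_normal H j).conj_mem x hx g⁻¹
      have key : ⁅g * h * g⁻¹, x⁆ = g * ⁅h, g⁻¹ * x * g⁆ * g⁻¹ := by
        simp only [commutatorElement_def]; group
      rw [key]
      exact auxP_conj k (j + 1) _ g (hh _ hx')

theorem auxP_mul {H : Type*} [Group H] :
    ∀ (k j : ℕ) (a b : H), auxP j k a → auxP j k b → auxP j k (a * b)
  | 0, j, a, b, ha, hb => by simp only [auxP] at *; simp [ha, hb]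
  | k + 1, j, a, b, ha, hb => fun x hx => by
      have key : ⁅a * b, x⁆ = (a * ⁅b, x⁆ * a⁻¹) * ⁅a, x⁆ := by
        simp only [commutatorElement_def]; group
      rw [key]
      exact auxP_mul k (j + 1) _ _ (auxP_conj k (j + 1) _ a (hb x hx)) (ha x hx)

theorem auxP_inv {H : Type*} [Group H] :
    ∀ (k j : ℕ) (a : H), auxP j k a → auxP j k a⁻¹
  | 0, j, a, ha => by simp only [auxP] at *; simp [ha]
  | k + 1, j, a, ha => fun x hx => by
      have key : ⁅a⁻¹, x⁆ = a⁻¹ * ⁅a, x⁆⁻¹ * a := by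
        simp only [commutatorElement_def]; group
      rw [key]
      have := auxP_inv k (j + 1) _ (ha x hx)
      simpa using auxP_conj k (j + 1) _ a⁻¹ this

def auxS (H : Type*) [Group H] (j k : ℕ) : Subgroup H where
  carrier := {h | auxP j k h}
  one_mem' := auxP_one j k
  mul_mem' ha hb := auxP_mul k j _ _ ha hb
  inv_mem' ha := auxP_inv k j _ ha

theorem mem_auxS {H : Type*} [Group H] {j k : ℕ} {h : H} :
    h ∈ auxS H j k ↔ auxP j k h := Iff.rfl

theorem frakD_auxP {H : Type*} [Group H] :
    ∀ (k j : ℕ) (h : H),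
      (∀ xs : List H, xs.length = k →
        (∀ i : Fin xs.length, xs.get i ∈ derivedSeries H (j + i)) →
        iteratedCommutator h xs = 1) → auxP j k h
  | 0, j, h, hh => hh [] rfl (fun i => i.elim0)
  | k + 1, j, h, hh => fun x hx => by
      refine frakD_auxP k (j + 1) _ (fun xs hlen hmem => ?_)
      have : iteratedCommutator h (x :: xs) = 1 := by
        refine hh (x :: xs) (by simp [hlen]) ?_
        intro i
        rcases i with ⟨i, hi⟩
        match i with
        | 0 => simpa using hx
        | Nat.succ m =>
            have := hmem ⟨m, by simpa using Nat.lt_of_succ_lt_succ hi⟩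
            simpa [Nat.add_comm, Nat.add_assoc, Nat.add_left_comm] using this
      simpa [iteratedCommutator] using this

/-- If `p : H → G` is a surjective group homomorphism whose kernel is contained in
`𝔇ₙ(H)` (for a positive integer `n`), and `G` is perfect, then
`Γ_{n+1}(H) = derivedSeries H n` is a perfect group. -/
theorem perfect_derivedSeries_of_ker_le_frakD
    {H G : Type*} [Group H] [Group G] (p : H →* G) (hp : Function.Surjective p)
    (n : ℕ) (hn : 0 < n) (hker : ∀ x ∈ p.ker, x ∈ frakD H n)
    (hG : commutator G = ⊤) :
    commutator (derivedSeries H n) = ⊤ := by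
  -- derived series of G is always ⊤
  have hGtop : ∀ m, derivedSeries G m = ⊤ := by
    intro m
    induction m with
    | zero => exact derivedSeries_zero G
    | succ m ih => rw [derivedSeries_succ, ih, ← commutator_def, hG]
  set D : Subgroup H := derivedSeries H (n + 1) with hD
  have hDnormal : D.Normal := derivedSeries_normal H (n + 1)
  have hmapD : D.map p = ⊤ := by rw [hD, map_derivedSeries_eq hp, hGtop]
  -- main induction
  have key : ∀ j, j ≤ n → derivedSeries H j ≤ auxS H j (n - j) ⊔ D := by
    intro j
    induction j with
    | zero =>
        intro _ h _
        obtain ⟨u, hu, hpu⟩ : ∃ u ∈ D, p u = p h := by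
          have : p h ∈ D.map p := by rw [hmapD]; trivial
          simpa using this
        have hker' : h * u⁻¹ ∈ p.ker := by
          rw [MonoidHom.mem_ker, map_mul, map_inv, hpu, mul_inv_cancel]
        have h1 : h * u⁻¹ ∈ auxS H 0 (n - 0) := by
          rw [Nat.sub_zero, mem_auxS]
          exact frakD_auxP n 0 _ (fun xs hlen hmem =>
            hker _ hker' xs hlen (fun i => by simpa using hmem i))
        have : h = (h * u⁻¹) * u := by group
        rw [this]
        exact Subgroup.mul_mem _ (Subgroup.mem_sup_left h1) (Subgroup.mem_sup_right hu)
    | succ j ih =>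
        intro hjn
        have hj : j ≤ n := Nat.le_of_succ_le hjn
        have hsub : n - j = (n - (j + 1)) + 1 := by omega
        rw [derivedSeries_succ]
        rw [Subgroup.commutator_le]
        intro g₁ hg₁ g₂ hg₂
        have hg₁' := ih hj hg₁
        rw [← SetLike.mem_coe, Subgroup.mul_normal] at hg₁'
        obtain ⟨a, ha, d, hd, rfl⟩ := hg₁'
        have key1 : ⁅a * d, g₂⁆ = (a * ⁅d, g₂⁆ * a⁻¹) * ⁅a, g₂⁆ := by
          simp only [commutatorElement_def]; group
        rw [key1]
        refine Subgroup.mul_mem _ (Subgroup.mem_sup_right ?_) (Subgroup.mem_sup_left ?_)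
        · -- a * ⁅d, g₂⁆ * a⁻¹ ∈ D
          have h1 : ⁅d, g₂⁆ ∈ D := by
            have : d * (g₂ * d⁻¹ * g₂⁻¹) ∈ D :=
              Subgroup.mul_mem _ hd (by simpa using hDnormal.conj_mem d⁻¹ (Subgroup.inv_mem _ hd) g₂)
            simpa [commutatorElement_def, mul_assoc] using this
          simpa using hDnormal.conj_mem _ h1 a
        · -- ⁅a, g₂⁆ ∈ auxS H (j+1) (n - (j+1))
          have ha' : auxP j (n - j) a := ha
          rw [hsub] at ha'
          exact ha' g₂ hg₂
  have hbot : auxS H n (n - n) = ⊥ := by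
    ext h
    rw [mem_auxS, Nat.sub_self, Subgroup.mem_bot]
    rfl
  have hle : derivedSeries H n ≤ D := by
    have := key n le_rfl
    rwa [hbot, bot_sup_eq] at this
  have heq : derivedSeries H (n + 1) = derivedSeries H n := by
    refine le_antisymm ?_ hle
    rw [derivedSeries_succ]
    haveI := derivedSeries_normal H n
    exact Subgroup.commutator_le_left _ _
  -- translate to commutator of the subgroup
  apply Subgroup.map_injective (derivedSeries H n).subtype_injective
  rw [commutator_def, Subgroup.map_commutator]
  have htop : Subgroup.map (derivedSeries H n).subtype ⊤ = derivedSeries H n := by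
    rw [← MonoidHom.range_eq_map, Subgroup.range_subtype]
  rw [htop, ← derivedSeries_succ, heq]
end

section
/- Let G be a finitely generated group and n a positive integer such that γ_{n+1}(G) is finitely generated. Then γ_k(G) is finitely generated for each 1 ≤ k ≤ n+1. -/
open Subgroup
open scoped commutatorElement

private lemma aux_comm_mul_left {Q : Type*} [Group Q] (x z y : Q) :
    ⁅x * z, y⁆ = (x * ⁅z, y⁆ * x⁻¹) * ⁅x, y⁆ := by
  simp only [commutatorElement_def]; group

private lemma aux_comm_mul_right {Q : Type*} [Group Q] (x y z : Q) :
    ⁅x, y * z⁆ = ⁅x, y⁆ * (y * ⁅x, z⁆ * y⁻¹) := by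
  simp only [commutatorElement_def]; group

private lemma aux_conj_of_center {Q : Type*} [Group Q] {c : Q} (hc : c ∈ Subgroup.center Q)
    (g : Q) : g * c * g⁻¹ = c := by
  rw [Subgroup.mem_center_iff] at hc
  rw [hc g, mul_assoc, mul_inv_cancel, mul_one]

/-- The key abstract lemma: if all commutators out of `H` are central, `H` is generated by `A`
together with a central subgroup `N`, `S` generates the whole group, and all commutators
`⁅a, s⁆` lie in `D`, then every commutator `⁅x, y⁆` with `x ∈ H` lies in `D`. -/
private lemma aux_commutator_mem {Q : Type*} [Group Q] (H N D : Subgroup Q) (A S : Set Q)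
    (hcent : ∀ x ∈ H, ∀ y : Q, ⁅x, y⁆ ∈ Subgroup.center Q)
    (hN : N ≤ Subgroup.center Q)
    (hH : H = Subgroup.closure A ⊔ N)
    (hS : Subgroup.closure S = ⊤)
    (hD : ∀ a ∈ A, ∀ s ∈ S, ⁅a, s⁆ ∈ D) :
    ∀ x ∈ H, ∀ y : Q, ⁅x, y⁆ ∈ D := by
  have hc : Subgroup.closure (A ∪ (N : Set Q)) = H := by
    rw [Subgroup.closure_union, Subgroup.closure_eq, hH]
  -- inner induction: for a fixed x ∈ H with base case on S, all commutators lie in D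
  have inner : ∀ x ∈ H, (∀ s ∈ S, ⁅x, s⁆ ∈ D) → ∀ y : Q, ⁅x, y⁆ ∈ D := by
    intro x hx hbase y
    have hy : y ∈ Subgroup.closure S := by rw [hS]; trivial
    induction hy using Subgroup.closure_induction with
    | mem s hs => exact hbase s hs
    | one => rw [commutatorElement_one_right]; exact one_mem D
    | mul y z hy' hz' py pz =>
        rw [aux_comm_mul_right, aux_conj_of_center (hcent x hx z) y]
        exact mul_mem py pz
    | inv y hy' py =>
        have h1 : ⁅x, y * y⁻¹⁆ = ⁅x, y⁆ * (y * ⁅x, y⁻¹⁆ * y⁻¹) := aux_comm_mul_right x y y⁻¹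
        rw [mul_inv_cancel, commutatorElement_one_right,
          aux_conj_of_center (hcent x hx y⁻¹) y] at h1
        have hcm := Subgroup.mem_center_iff.mp (hcent x hx y⁻¹) ⁅x, y⁆
        rw [hcm] at h1
        have h2 : ⁅x, y⁻¹⁆ = ⁅x, y⁆⁻¹ := eq_inv_of_mul_eq_one_left h1.symm
        rw [h2]; exact inv_mem py
  intro x hx
  have hx' : x ∈ Subgroup.closure (A ∪ (N : Set Q)) := by rw [hc]; exact hx
  clear hx
  induction hx' using Subgroup.closure_induction with
  | mem a ha =>
      rcases ha with ha | ha
      · exact inner a (hc ▸ Subgroup.subset_closure (Or.inl ha)) (fun s hs => hD a ha s hs)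
      · intro y
        have : Commute a y := by
          have := Subgroup.mem_center_iff.mp (hN ha) y
          exact this.symm
        rw [this.commutator_eq]; exact one_mem D
  | one => intro y; rw [commutatorElement_one_left]; exact one_mem D
  | mul x z hx1 hz1 px pz =>
      intro y
      have hzH : z ∈ H := hc ▸ hz1
      rw [aux_comm_mul_left, aux_conj_of_center (hcent z hzH y) x]
      exact mul_mem (pz y) (px y)
      
  | inv x hx1 px =>
      intro y
      have hxH : x ∈ H := hc ▸ hx1
      have h1 : ⁅x⁻¹ * x, y⁆ = (x⁻¹ * ⁅x, y⁆ * x⁻¹⁻¹) * ⁅x⁻¹, y⁆ := aux_comm_mul_left x⁻¹ x y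
      rw [inv_mul_cancel, commutatorElement_one_left,
        aux_conj_of_center (hcent x hxH y) x⁻¹] at h1
      have hcm := Subgroup.mem_center_iff.mp (hcent x⁻¹ (hc ▸ inv_mem hx1) y) ⁅x, y⁆
      rw [hcm] at h1
      have h2 : ⁅x⁻¹, y⁆ = ⁅x, y⁆⁻¹ := eq_inv_of_mul_eq_one_left h1.symm
      rw [h2]; exact inv_mem (px y)

/-- For a finitely generated group, each lower central series quotient is finitely
generated over the next term: `γ_k = ⟨C⟩ ⊔ γ_{k+1}` with `C` finite. -/
private lemma aux_exists_finite_step {G : Type*} [Group G] (S : Set G) (hSfin : S.Finite)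
    (hS : Subgroup.closure S = ⊤) (k : ℕ) :
    ∃ C : Set G, C.Finite ∧ C ⊆ (⊤ : Subgroup G).lowerCentralSeries k ∧
      Subgroup.closure C ⊔ (⊤ : Subgroup G).lowerCentralSeries (k + 1) = (⊤ : Subgroup G).lowerCentralSeries k := by
  induction k with
  | zero =>
      refine ⟨S, hSfin, fun x _ => by rw [Subgroup.lowerCentralSeries_zero]; trivial, ?_⟩
      rw [hS, Subgroup.lowerCentralSeries_zero, top_sup_eq]
  | succ k ih =>
      obtain ⟨C, hCfin, hCsub, hC⟩ := ih
      set Dset : Set G := (fun p : G × G => ⁅p.1, p.2⁆) '' (C ×ˢ S) with hDset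
      have hDfin : Dset.Finite := (hCfin.prod hSfin).image _
      have hlcs : (⊤ : Subgroup G).lowerCentralSeries (k + 1) = ⁅(⊤ : Subgroup G).lowerCentralSeries k, ⊤⁆ := rfl
      have hlcs2 : (⊤ : Subgroup G).lowerCentralSeries (k + 2) = ⁅(⊤ : Subgroup G).lowerCentralSeries (k + 1), ⊤⁆ := rfl
      have hDsub : Dset ⊆ (⊤ : Subgroup G).lowerCentralSeries (k + 1) := by
        rintro _ ⟨⟨c, s⟩, ⟨hcC, _⟩, rfl⟩
        rw [hlcs]
        exact commutator_mem_commutator (hCsub hcC) (mem_top _)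
      refine ⟨Dset, hDfin, hDsub, le_antisymm
        (sup_le ((Subgroup.closure_le _).mpr hDsub)
          (Subgroup.lowerCentralSeries_antitone ⊤ (by omega))) ?_⟩
      -- work in the quotient by γ_{k+2}
      set π := QuotientGroup.mk' ((⊤ : Subgroup G).lowerCentralSeries (k + 2)) with hπ
      have hker : π.ker = (⊤ : Subgroup G).lowerCentralSeries (k + 2) := QuotientGroup.ker_mk' _
      have hsurj : Function.Surjective π := QuotientGroup.mk'_surjective _
      set N' := ((⊤ : Subgroup G).lowerCentralSeries (k + 1)).map π with hN'
      have hNc : N' ≤ Subgroup.center (G ⧸ (⊤ : Subgroup G).lowerCentralSeries (k + 2)) := by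
        rintro _ ⟨x, hx, rfl⟩
        rw [Subgroup.mem_center_iff]
        intro q
        obtain ⟨g, rfl⟩ := hsurj q
        have hmem : ⁅x, g⁆ ∈ π.ker := by
          rw [hker, hlcs2]
          exact commutator_mem_commutator hx (mem_top _)
        have : ⁅π x, π g⁆ = 1 := by
          rw [← map_commutatorElement]
          exact hmem
        exact (commutatorElement_eq_one_iff_mul_comm.mp this).symm
      have hcent : ∀ x ∈ ((⊤ : Subgroup G).lowerCentralSeries k).map π,
          ∀ y : G ⧸ (⊤ : Subgroup G).lowerCentralSeries (k + 2),
          ⁅x, y⁆ ∈ Subgroup.center (G ⧸ (⊤ : Subgroup G).lowerCentralSeries (k + 2)) := by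
        rintro _ ⟨x, hx, rfl⟩ y
        obtain ⟨g, rfl⟩ := hsurj y
        refine hNc (Subgroup.mem_map.mpr ⟨⁅x, g⁆, ?_, map_commutatorElement π x g⟩)
        rw [hlcs]
        exact commutator_mem_commutator hx (mem_top _)
      have hHq : ((⊤ : Subgroup G).lowerCentralSeries k).map π = Subgroup.closure (π '' C) ⊔ N' := by
        rw [← hC, Subgroup.map_sup, MonoidHom.map_closure]
      have hSq : Subgroup.closure (π '' S) = ⊤ := by
        rw [← MonoidHom.map_closure, hS, Subgroup.map_top_of_surjective _ hsurj]
      have hDq : ∀ a ∈ π '' C, ∀ s ∈ π '' S,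
          ⁅a, s⁆ ∈ Subgroup.closure (π '' Dset) := by
        rintro _ ⟨c, hcC, rfl⟩ _ ⟨s, hsS, rfl⟩
        rw [← map_commutatorElement]
        exact Subgroup.subset_closure ⟨⁅c, s⁆, ⟨⟨c, s⟩, ⟨hcC, hsS⟩, rfl⟩, rfl⟩
      have main := aux_commutator_mem (((⊤ : Subgroup G).lowerCentralSeries k).map π) N'
        (Subgroup.closure (π '' Dset)) (π '' C) (π '' S) hcent hNc hHq hSq hDq
      rw [hlcs, Subgroup.commutator_le]
      intro x hx g _
      have hmem : ⁅π x, π g⁆ ∈ Subgroup.closure (π '' Dset) :=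
        main (π x) ⟨x, hx, rfl⟩ (π g)
      have hmem2 : ⁅x, g⁆ ∈ Subgroup.comap π (Subgroup.map π (Subgroup.closure Dset)) := by
        rw [← MonoidHom.map_closure] at hmem
        exact Subgroup.mem_comap.mpr (by rwa [map_commutatorElement])
      rw [Subgroup.comap_map_eq, hker] at hmem2
      exact hmem2

/-- If `G` is a finitely generated group and `γ_{n+1}(G) = (⊤ : Subgroup G).lowerCentralSeries n` is
finitely generated for a positive integer `n`, then `γ_k(G)` is finitely generated for
each `1 ≤ k ≤ n + 1`, i.e. `(⊤ : Subgroup G).lowerCentralSeries k` is finitely generated for all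
`k ≤ n`. -/
theorem fg_lowerCentralSeries_of_fg
    {G : Type*} [Group G] (hG : Group.FG G) (n : ℕ) (hn : 0 < n)
    (h : Group.FG ((⊤ : Subgroup G).lowerCentralSeries n)) :
    ∀ k ≤ n, Group.FG ((⊤ : Subgroup G).lowerCentralSeries k) := by
  obtain ⟨S₀, hS₀⟩ := hG.out
  have key : ∀ k : ℕ, Group.FG ((⊤ : Subgroup G).lowerCentralSeries (k + 1)) →
      Group.FG ((⊤ : Subgroup G).lowerCentralSeries k) := by
    intro k hk
    rw [Group.fg_iff_subgroup_fg] at hk ⊢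
    obtain ⟨T, hT, hTfin⟩ := (Subgroup.fg_iff _).mp hk
    obtain ⟨C, hCfin, _, hC⟩ := aux_exists_finite_step (S₀ : Set G) S₀.finite_toSet hS₀ k
    refine (Subgroup.fg_iff _).mpr ⟨C ∪ T, ?_, hCfin.union hTfin⟩
    rw [Subgroup.closure_union, hT, hC]
  have down : ∀ j, j ≤ n → Group.FG ((⊤ : Subgroup G).lowerCentralSeries (n - j)) := by
    intro j
    induction j with
    | zero => intro _; simpa using h
    | succ j ih =>
        intro hj
        have hfg := ih (by omega)
        have heq : n - j = (n - (j + 1)) + 1 := by omega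
        rw [heq] at hfg
        exact key _ hfg
  intro k hk
  have := down (n - k) (by omega)
  rwa [show n - (n - k) = k by omega] at this
end

section
/- Let F be a free group and R a normal subgroup of F such that the quotient G = F/R is a Schur group; in terms of the presentation this means R · [F, F] = F (G is perfect) and R ∩ [F, F] = [R, F] (the Schur multiplier of G, given by Hopf's formula (R ∩ [F, F])/[R, F], is trivial). Then for every k ≥ 1, R ∩ γ_{k+1}(F) = γ_{k+1}(R, F); equivalently, the k-nilpotent multiplier (R ∩ γ_{k+1}(F))/γ_{k+1}(R, F) of G is trivial. -/
open scoped commutatorElement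

/-- The relative lower central series `γ_{k+1}(R, F)`: `γ₁(R, F) = R` and
`γ_{k+1}(R, F) = [γ_k(R, F), F]`, so `relLowerCentralSeries R k = γ_{k+1}(R, F)`. -/
def relLowerCentralSeries {F : Type*} [Group F] (R : Subgroup F) : ℕ → Subgroup F
  | 0 => R
  | k + 1 => ⁅relLowerCentralSeries R k, (⊤ : Subgroup F)⁆


section Aux

variable {H : Type*} [Group H]

/-- Drop everywhere-commuting factors from a commutator. -/
private lemma comm_mul_central (a b m m' : H) (hm : ∀ y, Commute m y) (hm' : ∀ y, Commute m' y) :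
    ⁅a * m, b * m'⁆ = ⁅a, b⁆ := by
  have h1 : ⁅a * m, b * m'⁆ = a * (m * (b * m') * m⁻¹) * a⁻¹ * (b * m')⁻¹ := by
    rw [commutatorElement_def]; group
  have h2 : m * (b * m') * m⁻¹ = b * m' := by rw [(hm (b * m')).eq]; group
  rw [h1, h2, ← commutatorElement_def]
  have h3 : ⁅a, b * m'⁆ = a * b * (m' * a⁻¹ * m'⁻¹) * b⁻¹ := by
    rw [commutatorElement_def]; group
  have h4 : m' * a⁻¹ * m'⁻¹ = a⁻¹ := by rw [(hm' a⁻¹).eq]; group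
  rw [h3, h4, ← commutatorElement_def]

private lemma comm_aux (u v n : H) (hc : ∀ y : H, Commute ⁅u, n⁆ y)
    (hd : Commute u ⁅v, n⁆) (h2 : Commute ⁅u, v⁆ ⁅v, n⁆) :
    ⁅⁅u, v⁆, n⁆ = 1 := by
  have step2 : ∀ X : H, ⁅u, n⁆⁻¹ * X * ⁅u, n⁆ = X := by
    intro X
    rw [(hc X).inv_left.eq]; group
  have step4 : ⁅v, n⁆⁻¹ * ⁅u, v⁆ * ⁅v, n⁆ = ⁅u, v⁆ := by
    rw [mul_assoc, h2.eq]; group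
  have key : n * ⁅u, v⁆ * n⁻¹ = ⁅u, v⁆ := by
    rw [conjugate_commutatorElement]
    have eu : n * u * n⁻¹ = ⁅u, n⁆⁻¹ * u := by rw [commutatorElement_def]; group
    have ev : n * v * n⁻¹ = ⁅v, n⁆⁻¹ * v := by rw [commutatorElement_def]; group
    rw [eu, ev]
    have step1 : ⁅⁅u, n⁆⁻¹ * u, ⁅v, n⁆⁻¹ * v⁆
        = ⁅u, n⁆⁻¹ * (u * ⁅v, n⁆⁻¹ * v * u⁻¹) * ⁅u, n⁆ * (v⁻¹ * ⁅v, n⁆) := by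
      rw [commutatorElement_def]; group
    rw [step1, step2]
    have step3 : u * ⁅v, n⁆⁻¹ = ⁅v, n⁆⁻¹ * u := hd.inv_right.eq
    rw [step3, ← step4]
    rw [commutatorElement_def]; group
  rw [commutatorElement_eq_one_iff_mul_comm]
  nth_rewrite 1 [← key]
  group

end Aux


section Aux2

variable {H : Type*} [Group H]

private lemma ucs_one_step {m : ℕ} {n : H} (hn : n ∈ Subgroup.upperCentralSeries H (m + 1)) (v : H) :
    ⁅v, n⁆ ∈ Subgroup.upperCentralSeries H m := by
  have h := mem_upperCentralSeries_succ_iff.mp hn v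
  have : ⁅v, n⁆ = (n * v * n⁻¹ * v⁻¹)⁻¹ := by rw [commutatorElement_def]; group
  rw [this]
  exact inv_mem h

/-- `[γ_{i+1}(H), Z_{i+j+1}(H)] ≤ Z_j(H)`. -/
private lemma lcs_comm_ucs :
    ∀ (i j : ℕ), ∀ u ∈ (⊤ : Subgroup H).lowerCentralSeries i, ∀ n ∈ Subgroup.upperCentralSeries H (i + j + 1),
      ⁅u, n⁆ ∈ Subgroup.upperCentralSeries H j := by
  intro i
  induction i with
  | zero =>
    intro j u _ n hn
    rw [Nat.zero_add] at hn
    exact ucs_one_step hn u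
  | succ i ih =>
    intro j
    let S : Subgroup H :=
      { carrier := {x | ∀ m ∈ Subgroup.upperCentralSeries H (i + 1 + j + 1),
          ⁅x, m⁆ ∈ Subgroup.upperCentralSeries H j}
        one_mem' := by
          intro m _
          rw [commutatorElement_one_left]
          exact one_mem _
        mul_mem' := by
          intro x y hx hy m hm
          have hid : ⁅x * y, m⁆ = x * ⁅y, m⁆ * x⁻¹ * ⁅x, m⁆ := by
            rw [commutatorElement_def, commutatorElement_def, commutatorElement_def]; group
          rw [hid]
          exact mul_mem ((inferInstance : (Subgroup.upperCentralSeries H j).Normal).conj_mem _ (hy m hm) x) (hx m hm)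
        inv_mem' := by
          intro x hx m hm
          have hid : ⁅x⁻¹, m⁆ = x⁻¹ * ⁅x, m⁆⁻¹ * x⁻¹⁻¹ := by
            rw [commutatorElement_def, commutatorElement_def]; group
          rw [hid]
          exact (inferInstance : (Subgroup.upperCentralSeries H j).Normal).conj_mem _ (inv_mem (hx m hm)) x⁻¹ }
    have hle : (⊤ : Subgroup H).lowerCentralSeries (i + 1) ≤ S := by
      show ⁅(⊤ : Subgroup H).lowerCentralSeries i, (⊤ : Subgroup H)⁆ ≤ S
      refine Subgroup.commutator_le.mpr ?_
      intro u hu v hv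
      intro m hm
      have hm' : m ∈ Subgroup.upperCentralSeries H (i + (j + 1) + 1) :=
        (by omega : i + 1 + j + 1 = i + (j + 1) + 1) ▸ hm
      have hd : ⁅v, m⁆ ∈ Subgroup.upperCentralSeries H (i + j + 1) := by
        have : m ∈ Subgroup.upperCentralSeries H ((i + j + 1) + 1) :=
          (by omega : i + 1 + j + 1 = i + j + 1 + 1) ▸ hm
        exact ucs_one_step this v
      have huv : ⁅u, v⁆ ∈ (⊤ : Subgroup H).lowerCentralSeries i :=
        lowerCentralSeries_antitone ⊤ (Nat.le_succ i)
          (Subgroup.commutator_mem_commutator hu hv)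
      -- work in the quotient by Z_j
      set Z := Subgroup.upperCentralSeries H j with hZ
      set π := QuotientGroup.mk' Z with hπ
      have hmem : ∀ x : H, π x = 1 → x ∈ Z := by
        intro x hx
        exact (QuotientGroup.eq_one_iff x).mp hx
      have hmem' : ∀ x : H, x ∈ Z → π x = 1 := by
        intro x hx
        exact (QuotientGroup.eq_one_iff x).mpr hx
      apply hmem
      rw [map_commutatorElement, map_commutatorElement]
      apply comm_aux
      · intro y
        obtain ⟨z, rfl⟩ := QuotientGroup.mk'_surjective Z y
        apply commutatorElement_eq_one_iff_commute.mp
        rw [← map_commutatorElement, ← map_commutatorElement]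
        apply hmem'
        have h1 : ⁅u, m⁆ ∈ Subgroup.upperCentralSeries H (j + 1) := ih (j + 1) u hu m hm'
        have h2 := mem_upperCentralSeries_succ_iff.mp h1 z
        have hid : ⁅⁅u, m⁆, z⁆ = ⁅u, m⁆ * z * ⁅u, m⁆⁻¹ * z⁻¹ := rfl
        rw [hid]; exact h2
      · apply commutatorElement_eq_one_iff_commute.mp
        rw [← map_commutatorElement, ← map_commutatorElement]
        exact hmem' _ (ih j u hu ⁅v, m⁆ hd)
      · apply commutatorElement_eq_one_iff_commute.mp
        rw [← map_commutatorElement, ← map_commutatorElement]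
        exact hmem' _ (ih j ⁅u, v⁆ huv ⁅v, m⁆ hd)
    intro u hu n hn
    exact hle hu n hn

end Aux2

section Aux3

variable {H : Type*} [Group H]

private lemma ucs_inf_le (K : Subgroup H) :
    ∀ (c : ℕ) (x : H) (hx : x ∈ K), x ∈ Subgroup.upperCentralSeries H c →
      (⟨x, hx⟩ : K) ∈ Subgroup.upperCentralSeries K c := by
  intro c
  induction c with
  | zero =>
    intro x hx h
    rw [upperCentralSeries_zero] at h ⊢
    rw [Subgroup.mem_bot] at h ⊢
    exact Subtype.ext h
  | succ c ih =>
    intro x hx h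
    rw [mem_upperCentralSeries_succ_iff]
    intro y
    exact ih _ (mul_mem (mul_mem (mul_mem hx y.2) (inv_mem hx)) (inv_mem y.2))
      (mem_upperCentralSeries_succ_iff.mp h y)

private lemma map_subtype_top (K : Subgroup H) :
    Subgroup.map K.subtype ⊤ = K := by
  rw [← MonoidHom.range_eq_map, Subgroup.range_subtype]

private lemma map_lcs_normal (K : Subgroup H) [K.Normal] (c : ℕ) :
    (Subgroup.map K.subtype ((⊤ : Subgroup K).lowerCentralSeries c)).Normal := by
  induction c with
  | zero =>
    rw [lowerCentralSeries_zero, map_subtype_top]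
    infer_instance
  | succ c ih =>
    show (Subgroup.map K.subtype ⁅(⊤ : Subgroup K).lowerCentralSeries c, (⊤ : Subgroup K)⁆).Normal
    rw [Subgroup.map_commutator, map_subtype_top]
    haveI := ih
    exact Subgroup.commutator_normal _ _

private lemma map_lcs_surj {G' : Type*} [Group G'] (f : H →* G') (hf : Function.Surjective f) :
    ∀ c, Subgroup.map f ((⊤ : Subgroup H).lowerCentralSeries c) = (⊤ : Subgroup G').lowerCentralSeries c := by
  intro c
  induction c with
  | zero =>
    rw [lowerCentralSeries_zero, lowerCentralSeries_zero, ← MonoidHom.range_eq_map]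
    exact MonoidHom.range_eq_top.mpr hf
  | succ c ih =>
    show Subgroup.map f ⁅(⊤ : Subgroup H).lowerCentralSeries c, (⊤ : Subgroup H)⁆ = _
    rw [Subgroup.map_commutator, ih, ← MonoidHom.range_eq_map,
      MonoidHom.range_eq_top.mpr hf]
    rfl

end Aux3

set_option linter.unusedSectionVars false

section Schur

universe u

variable {F : Type u} [Group F] [IsFreeGroup F] (R : Subgroup F) [R.Normal]

/-- If `F = R·[F,F]` then `F ⧸ R` is perfect, and all terms of its lower central
series are the whole group. -/
private lemma quot_lcs_top (hperf : R ⊔ commutator F = ⊤) :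
    ∀ c, (⊤ : Subgroup (F ⧸ R)).lowerCentralSeries c = ⊤ := by
  have hcomm : commutator (F ⧸ R) = ⊤ := by
    apply le_antisymm le_top
    have h1 : Subgroup.map (QuotientGroup.mk' R) R ≤ commutator (F ⧸ R) := by
      rintro y ⟨x, hx, rfl⟩
      have : QuotientGroup.mk' R x = 1 := (QuotientGroup.eq_one_iff x).mpr hx
      rw [this]
      exact one_mem _
    have h2 : Subgroup.map (QuotientGroup.mk' R) (commutator F) ≤ commutator (F ⧸ R) := by
      rw [commutator_def, Subgroup.map_commutator]
      exact Subgroup.commutator_mono le_top le_top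
    calc (⊤ : Subgroup (F ⧸ R))
        = Subgroup.map (QuotientGroup.mk' R) ⊤ := by
          rw [← MonoidHom.range_eq_map,
            MonoidHom.range_eq_top.mpr (QuotientGroup.mk'_surjective R)]
      _ = Subgroup.map (QuotientGroup.mk' R) (R ⊔ commutator F) := by rw [hperf]
      _ = Subgroup.map (QuotientGroup.mk' R) R ⊔
            Subgroup.map (QuotientGroup.mk' R) (commutator F) := Subgroup.map_sup _ _ _
      _ ≤ commutator (F ⧸ R) := sup_le h1 h2
  intro c
  induction c with
  | zero => rfl
  | succ c ih =>
    show ⁅(⊤ : Subgroup (F ⧸ R)).lowerCentralSeries c, (⊤ : Subgroup (F ⧸ R))⁆ = ⊤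
    rw [ih]
    exact hcomm

/-- Base case: central extensions of the Schur group `F ⧸ R` have trivial
intersection of kernel and commutator subgroup. -/
private lemma central_case (hmult : R ⊓ commutator F = ⁅R, (⊤ : Subgroup F)⁆)
    (H : Type u) [Group H] (q : H →* F ⧸ R) (hq : Function.Surjective q)
    (hker : q.ker ≤ Subgroup.center H) :
    q.ker ⊓ commutator H ≤ ⊥ := by
  classical
  set π := QuotientGroup.mk' R with hπdef
  have hπ : Function.Surjective π := QuotientGroup.mk'_surjective R
  set f : IsFreeGroup.Generators F → H :=
    fun a => Classical.choose (hq (π (IsFreeGroup.of a))) with hf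
  set φ : F →* H := IsFreeGroup.lift f with hφdef
  have hφ : ∀ x : F, q (φ x) = π x := by
    have : q.comp φ = π := by
      apply IsFreeGroup.ext_hom
      intro a
      show q (φ (IsFreeGroup.of a)) = π (IsFreeGroup.of a)
      rw [hφdef, IsFreeGroup.lift_of]
      exact Classical.choose_spec (hq (π (IsFreeGroup.of a)))
    intro x
    exact DFunLike.congr_fun this x
  have hcentral : ∀ m : H, m ∈ q.ker → ∀ y : H, Commute m y := by
    intro m hm y
    exact (Subgroup.mem_center_iff.mp (hker hm) y).symm
  have hdec : ∀ y : H, ∃ x : F, ∃ m ∈ q.ker, y = φ x * m := by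
    intro y
    obtain ⟨g, hg⟩ := hπ (q y)
    refine ⟨g, (φ g)⁻¹ * y, ?_, by group⟩
    rw [MonoidHom.mem_ker, map_mul, map_inv, hφ, hg]
    group
  have hcomm : commutator H ≤ Subgroup.map φ (commutator F) := by
    rw [commutator_def]
    refine Subgroup.commutator_le.mpr ?_
    intro a _ b _
    obtain ⟨x, m, hm, rfl⟩ := hdec a
    obtain ⟨y, m', hm', rfl⟩ := hdec b
    rw [comm_mul_central _ _ _ _ (hcentral m hm) (hcentral m' hm'), ← map_commutatorElement]
    exact Subgroup.mem_map_of_mem φ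
      (Subgroup.commutator_mem_commutator (Subgroup.mem_top x) (Subgroup.mem_top y))
  rintro x ⟨hxk, hxc⟩
  obtain ⟨w, hw, rfl⟩ := hcomm hxc
  have hwR : w ∈ R := by
    have h1 : π w = 1 := by rw [← hφ]; exact hxk
    exact (QuotientGroup.eq_one_iff w).mp h1
  have hwc : w ∈ ⁅R, (⊤ : Subgroup F)⁆ := hmult ▸ ⟨hwR, hw⟩
  have h2 : Subgroup.map φ ⁅R, (⊤ : Subgroup F)⁆ ≤ ⊥ := by
    rw [Subgroup.map_commutator]
    refine Subgroup.commutator_le.mpr ?_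
    rintro a ⟨r, hr, rfl⟩ b _
    have : φ r ∈ q.ker := by
      rw [MonoidHom.mem_ker, hφ]
      exact (QuotientGroup.eq_one_iff r).mpr hr
    rw [Subgroup.mem_bot]
    exact Commute.commutator_eq (hcentral _ this b)
  exact h2 (Subgroup.mem_map_of_mem φ hwc)

end Schur

section Main

universe u
set_option linter.unusedSectionVars false

variable {F : Type u} [Group F] [IsFreeGroup F] (R : Subgroup F) [R.Normal]

private lemma main_ind (hperf : R ⊔ commutator F = ⊤)
    (hmult : R ⊓ commutator F = ⁅R, (⊤ : Subgroup F)⁆) :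
    ∀ (c : ℕ) (H : Type u) [Group H] (p : H →* F ⧸ R), Function.Surjective p →
      p.ker ≤ Subgroup.upperCentralSeries H c → p.ker ⊓ (⊤ : Subgroup H).lowerCentralSeries c ≤ ⊥ := by
  intro c
  induction c with
  | zero =>
    intro H _ p hp hker x hx
    rw [upperCentralSeries_zero] at hker
    exact hker hx.1
  | succ c ih =>
    intro H _ p hp hker
    set N := p.ker with hN
    set N₁ := ⁅N, (⊤ : Subgroup H)⁆ with hN₁
    have hN₁N : N₁ ≤ N := Subgroup.commutator_le_left _ _
    have hN₁Z : N₁ ≤ Subgroup.upperCentralSeries H c := by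
      refine Subgroup.commutator_le.mpr ?_
      intro a ha y _
      have h := mem_upperCentralSeries_succ_iff.mp (hker ha) y
      have hid : ⁅a, y⁆ = a * y * a⁻¹ * y⁻¹ := rfl
      rw [hid]
      exact h
    haveI : N₁.Normal := Subgroup.commutator_normal _ _
    -- Step A : N ⊓ γ₂(H) ≤ N₁ = [N, H]
    have stepA : N ⊓ (⊤ : Subgroup H).lowerCentralSeries 1 ≤ N₁ := by
      have hN₁ker : N₁ ≤ p.ker := hN₁N
      set q : H ⧸ N₁ →* F ⧸ R := QuotientGroup.lift N₁ p hN₁ker with hq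
      have hqmk : ∀ x : H, q (QuotientGroup.mk' N₁ x) = p x := fun x => rfl
      have hqs : Function.Surjective q := by
        intro g
        obtain ⟨x, hx⟩ := hp g
        exact ⟨QuotientGroup.mk' N₁ x, by rw [hqmk, hx]⟩
      have hqker : q.ker ≤ Subgroup.center (H ⧸ N₁) := by
        intro y hy
        obtain ⟨x, rfl⟩ := QuotientGroup.mk'_surjective N₁ y
        have hxN : x ∈ N := by
          rw [MonoidHom.mem_ker] at hy
          rw [hqmk] at hy
          exact hy
        rw [Subgroup.mem_center_iff]
        intro z
        obtain ⟨w, rfl⟩ := QuotientGroup.mk'_surjective N₁ z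
        rw [← map_mul, ← map_mul]
        have hz : (w * x)⁻¹ * (x * w) ∈ N₁ := by
          have h5 : (w * x)⁻¹ * (x * w) = ⁅x⁻¹, w⁻¹⁆ := by
            rw [commutatorElement_def]; group
          rw [h5]
          exact Subgroup.commutator_mem_commutator (inv_mem hxN) (Subgroup.mem_top w⁻¹)
        exact (QuotientGroup.mk'_eq_mk' ..).mpr ⟨_, hz, by group⟩
      have hc := central_case R hmult (H ⧸ N₁) q hqs hqker
      intro x hx
      have h1 : QuotientGroup.mk' N₁ x ∈ q.ker := by
        rw [MonoidHom.mem_ker, hqmk]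
        exact hx.1
      have h2 : QuotientGroup.mk' N₁ x ∈ commutator (H ⧸ N₁) := by
        have := lowerCentralSeries.map (QuotientGroup.mk' N₁) 1
          (Subgroup.mem_map_of_mem (QuotientGroup.mk' N₁) hx.2)
        rwa [lowerCentralSeries_one] at this
      have h3 := hc ⟨h1, h2⟩
      rw [Subgroup.mem_bot] at h3
      exact (QuotientGroup.eq_one_iff x).mp h3
    -- the subgroup K = γ₂(H), with the restriction p' of p
    set K := (⊤ : Subgroup H).lowerCentralSeries 1 with hK
    haveI : K.Normal := Subgroup.lowerCentralSeries_normal ⊤ 1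
    set p' : K →* F ⧸ R := p.comp K.subtype with hp'
    have hp's : Function.Surjective p' := by
      intro g
      have : g ∈ (⊤ : Subgroup (F ⧸ R)).lowerCentralSeries 1 := by
        rw [quot_lcs_top R hperf 1]; exact Subgroup.mem_top g
      rw [← map_lcs_surj p hp 1] at this
      obtain ⟨x, hxK, hpx⟩ := this
      exact ⟨⟨x, hxK⟩, hpx⟩
    have hker' : p'.ker ≤ Subgroup.upperCentralSeries K c := by
      rintro ⟨x, hxK⟩ hx
      have hxN : x ∈ N := hx
      exact ucs_inf_le K c x hxK (hN₁Z (stepA ⟨hxN, hxK⟩))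
    have hIH := ih K p' hp's hker'
    -- Step B : γ_{c+2}(H) ≤ γ_{c+1}(K)
    set A := Subgroup.map K.subtype ((⊤ : Subgroup K).lowerCentralSeries c) with hA
    haveI hAnormal : A.Normal := map_lcs_normal K c
    have hdecA : ∀ y : H, ∃ a ∈ A, ∃ m ∈ N, y = a * m := by
      intro y
      have : p y ∈ (⊤ : Subgroup (F ⧸ R)).lowerCentralSeries c := by
        rw [quot_lcs_top R hperf c]; exact Subgroup.mem_top _
      rw [← map_lcs_surj p' hp's c] at this
      obtain ⟨xk, hxk, hpxk⟩ := this
      refine ⟨K.subtype xk, Subgroup.mem_map_of_mem _ hxk, (K.subtype xk)⁻¹ * y, ?_, by group⟩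
      rw [MonoidHom.mem_ker, map_mul, map_inv]
      have : p (K.subtype xk) = p y := hpxk
      rw [this]
      group
    have stepB : (⊤ : Subgroup H).lowerCentralSeries (c + 1) ≤ A := by
      show ⁅(⊤ : Subgroup H).lowerCentralSeries c, (⊤ : Subgroup H)⁆ ≤ A
      refine Subgroup.commutator_le.mpr ?_
      intro x hx y _
      obtain ⟨a, haA, m, hmN, rfl⟩ := hdecA y
      have hxm : ⁅x, m⁆ = 1 := by
        have h0 : ⁅x, m⁆ ∈ Subgroup.upperCentralSeries H 0 :=
          lcs_comm_ucs c 0 x hx m (hker hmN)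
        rw [upperCentralSeries_zero, Subgroup.mem_bot] at h0
        exact h0
      have hid : ⁅x, a * m⁆ = ⁅x, a⁆ * (a * ⁅x, m⁆ * a⁻¹) := by
        rw [commutatorElement_def, commutatorElement_def, commutatorElement_def]; group
      have : ⁅x, a * m⁆ = ⁅x, a⁆ := by rw [hid, hxm]; group
      rw [this]
      have h1 : x * a * x⁻¹ ∈ A := hAnormal.conj_mem a haA x
      have h2 : x * a * x⁻¹ * a⁻¹ ∈ A := mul_mem h1 (inv_mem haA)
      exact h2
    rintro x ⟨hxN, hxL⟩
    obtain ⟨xk, hxkL, hxkval⟩ := stepB hxL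
    have hxker : xk ∈ p'.ker := by
      rw [MonoidHom.mem_ker]
      show p (K.subtype xk) = 1
      rw [hxkval]
      exact hxN
    have h4 := hIH ⟨hxker, hxkL⟩
    rw [Subgroup.mem_bot] at h4 ⊢
    rw [← hxkval, h4, map_one]

end Main



/-- Let `F` be a free group and `R` a normal subgroup of `F` such that `F ⧸ R` is a
Schur group, i.e. `R · [F, F] = F` (perfectness) and `R ∩ [F, F] = [R, F]` (triviality of
the Schur multiplier via Hopf's formula). Then for every `k ≥ 1`,
`R ∩ γ_{k+1}(F) = γ_{k+1}(R, F)`; that is, the `k`-nilpotent multiplier of `F ⧸ R` is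
trivial. -/
theorem inf_lowerCentralSeries_eq_relLowerCentralSeries_of_schur
    {F : Type*} [Group F] [IsFreeGroup F] (R : Subgroup F) [R.Normal]
    (hperf : R ⊔ commutator F = ⊤)
    (hmult : R ⊓ commutator F = ⁅R, (⊤ : Subgroup F)⁆) :
    ∀ k, 1 ≤ k → R ⊓ (⊤ : Subgroup F).lowerCentralSeries k = relLowerCentralSeries R k := by
  have relNormal : ∀ m, (relLowerCentralSeries R m).Normal := by
    intro m
    induction m with
    | zero => exact ‹R.Normal›
    | succ m ihm =>
      show (⁅relLowerCentralSeries R m, (⊤ : Subgroup F)⁆).Normal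
      haveI := ihm
      exact Subgroup.commutator_normal _ _
  have easy : ∀ m, relLowerCentralSeries R m ≤ R ⊓ (⊤ : Subgroup F).lowerCentralSeries m := by
    intro m
    induction m with
    | zero => exact le_inf le_rfl le_top
    | succ m ihm =>
      show ⁅relLowerCentralSeries R m, (⊤ : Subgroup F)⁆ ≤ R ⊓ (⊤ : Subgroup F).lowerCentralSeries (m + 1)
      refine le_inf ?_ ?_
      · haveI := relNormal m
        exact le_trans (Subgroup.commutator_mono (le_trans ihm inf_le_left) le_rfl)
          (Subgroup.commutator_le_left R ⊤)
      · exact Subgroup.commutator_mono (le_trans ihm inf_le_right) le_rfl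
  intro k _
  refine le_antisymm ?_ (easy k)
  haveI := relNormal k
  set N := relLowerCentralSeries R k with hNdef
  have hNR : N ≤ R := le_trans (easy k) inf_le_left
  set mkN := QuotientGroup.mk' N with hmkN
  have hNker : N ≤ (QuotientGroup.mk' R).ker := by
    intro x hx
    rw [QuotientGroup.ker_mk']
    exact hNR hx
  set p : F ⧸ N →* F ⧸ R := QuotientGroup.lift N (QuotientGroup.mk' R) hNker with hp
  have hpmk : ∀ x : F, p (mkN x) = QuotientGroup.mk' R x := fun x => rfl
  have hpsurj : Function.Surjective p := by
    intro g
    obtain ⟨x, rfl⟩ := QuotientGroup.mk'_surjective R g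
    exact ⟨mkN x, hpmk x⟩
  have claim : ∀ (m j : ℕ), relLowerCentralSeries R (j + m) ≤ N →
      Subgroup.map mkN (relLowerCentralSeries R j) ≤ Subgroup.upperCentralSeries (F ⧸ N) m := by
    intro m
    induction m with
    | zero =>
      intro j h
      rintro y ⟨x, hx, rfl⟩
      rw [upperCentralSeries_zero, Subgroup.mem_bot]
      exact (QuotientGroup.eq_one_iff x).mpr (h hx)
    | succ m ihm =>
      intro j h
      rintro y ⟨x, hx, rfl⟩
      rw [mem_upperCentralSeries_succ_iff]
      intro z
      obtain ⟨w, rfl⟩ := QuotientGroup.mk'_surjective N z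
      have h1 : ⁅x, w⁆ ∈ relLowerCentralSeries R (j + 1) :=
        Subgroup.commutator_mem_commutator hx (Subgroup.mem_top w)
      have h2 : Subgroup.map mkN (relLowerCentralSeries R (j + 1)) ≤
          Subgroup.upperCentralSeries (F ⧸ N) m :=
        ihm (j + 1) (by rw [(by omega : j + 1 + m = j + (m + 1))]; exact h)
      have h3 := h2 (Subgroup.mem_map_of_mem mkN h1)
      have hid : mkN x * mkN w * (mkN x)⁻¹ * (mkN w)⁻¹ = mkN ⁅x, w⁆ := by
        rw [map_commutatorElement]
        rfl
      show mkN x * mkN w * (mkN x)⁻¹ * (mkN w)⁻¹ ∈ _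
      rw [hid]
      exact h3
  have hkerle : p.ker ≤ Subgroup.upperCentralSeries (F ⧸ N) k := by
    intro y hy
    obtain ⟨x, rfl⟩ := QuotientGroup.mk'_surjective N y
    have hxR : x ∈ R := by
      rw [MonoidHom.mem_ker, hpmk] at hy
      exact (QuotientGroup.eq_one_iff x).mp hy
    exact claim k 0 (by rw [Nat.zero_add]) (Subgroup.mem_map_of_mem mkN hxR)
  have hmain := main_ind R hperf hmult k (F ⧸ N) p hpsurj hkerle
  intro x hx
  have h1 : mkN x ∈ p.ker := by
    rw [MonoidHom.mem_ker, hpmk]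
    exact (QuotientGroup.eq_one_iff x).mpr hx.1
  have h2 : mkN x ∈ (⊤ : Subgroup (F ⧸ N)).lowerCentralSeries k :=
    lowerCentralSeries.map mkN k (Subgroup.mem_map_of_mem mkN hx.2)
  have h3 := hmain ⟨h1, h2⟩
  rw [Subgroup.mem_bot] at h3
  exact (QuotientGroup.eq_one_iff x).mp h3
end
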